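/- arXiv:2212.05739 — 7 statements merged into one kernel-verified Lean document; each statement's English description precedes it below -/
import Mathlib

section
/- Let n ≥ 4 be an even integer. Then λ(K⁺_{n/2,n/2}) is the largest real root of the polynomial f(x) = x³ − x² − (n²/4)x + n²/4 − n; that is, f(λ(K⁺_{n/2,n/2})) = 0 and every real root x of f satisfies x ≤ λ(K⁺_{n/2,n/2}). -/
open SimpleGraph

/-- The spectral radius (largest adjacency eigenvalue) of a finite simple graph. -/
noncomputable def specRad {V : Type*} [Fintype V] (G : SimpleGraph V) : ℝ :=
  letI : DecidableEq V := Classical.decEq V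
  letI : DecidableRel G.Adj := Classical.decRel _
  sSup (spectrum ℝ (G.adjMatrix ℝ))

/-- `KplusAB a b` : the complete bipartite graph `K_{a,b}` with one extra edge
(between vertices `0` and `1`) inside the part of size `a`. -/
def KplusAB (a b : ℕ) : SimpleGraph (Fin a ⊕ Fin b) where
  Adj x y :=
    match x, y with
    | .inl i, .inl j => (i.val = 0 ∧ j.val = 1) ∨ (i.val = 1 ∧ j.val = 0)
    | .inl _, .inr _ => True
    | .inr _, .inl _ => True
    | .inr _, .inr _ => False
  symm := by constructor; rintro (i | i) (j | j) h <;> simp_all <;> tauto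
  loopless := by constructor; rintro (i | i) h <;> simp_all <;> omega

open Matrix Finset

section Aux

lemma algmap_mulVec {V : Type*} [Fintype V] [DecidableEq V] (μ : ℝ) (v : V → ℝ) :
    (algebraMap ℝ (Matrix V V ℝ)) μ *ᵥ v = μ • v := by
  rw [Matrix.algebraMap_eq_diagonal]
  ext i
  simp [Matrix.mulVec_diagonal]

lemma memSpec_iff {V : Type*} [Fintype V] [DecidableEq V] (A : Matrix V V ℝ) (μ : ℝ) :
    μ ∈ spectrum ℝ A ↔ ∃ v : V → ℝ, v ≠ 0 ∧ A.mulVec v = μ • v := by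
  rw [spectrum.mem_iff, Matrix.isUnit_iff_isUnit_det, isUnit_iff_ne_zero, not_ne_iff,
    ← Matrix.exists_mulVec_eq_zero_iff]
  constructor
  · rintro ⟨v, hv, h⟩
    rw [Matrix.sub_mulVec, algmap_mulVec, sub_eq_zero] at h
    exact ⟨v, hv, h.symm⟩
  · rintro ⟨v, hv, h⟩
    refine ⟨v, hv, ?_⟩
    rw [Matrix.sub_mulVec, algmap_mulVec, sub_eq_zero, h]

lemma specRad_eq {V : Type*} [Fintype V] (G : SimpleGraph V) (L : ℝ)
    (h : ∀ (_ : DecidableEq V) (_ : DecidableRel G.Adj),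
      L ∈ spectrum ℝ (G.adjMatrix ℝ) ∧ ∀ μ ∈ spectrum ℝ (G.adjMatrix ℝ), μ ≤ L) :
    specRad G = L := by
  unfold specRad
  obtain ⟨hmem, hub⟩ := h (Classical.decEq V) (Classical.decRel _)
  exact le_antisymm (csSup_le ⟨L, hmem⟩ hub) (le_csSup ⟨L, fun μ hμ => hub μ hμ⟩ hmem)

variable {m : ℕ} [inst : DecidableRel (KplusAB m m).Adj]

lemma adj_ll (i j : Fin m) : (KplusAB m m).Adj (.inl i) (.inl j) ↔
    ((i.val = 0 ∧ j.val = 1) ∨ (i.val = 1 ∧ j.val = 0)) := Iff.rfl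

omit inst in
lemma adj_lr (i j : Fin m) : (KplusAB m m).Adj (.inl i) (.inr j) := trivial

omit inst in
lemma adj_rl (i j : Fin m) : (KplusAB m m).Adj (.inr i) (.inl j) := trivial

omit inst in
lemma adj_rr (i j : Fin m) : ¬ (KplusAB m m).Adj (.inr i) (.inr j) := fun h => h

lemma mulVec_inr (v : (Fin m ⊕ Fin m) → ℝ) (j : Fin m) :
    ((KplusAB m m).adjMatrix ℝ *ᵥ v) (Sum.inr j) = ∑ i : Fin m, v (Sum.inl i) := by
  simp only [Matrix.mulVec, dotProduct, Fintype.sum_sum_type, adjMatrix_apply]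
  rw [show (∑ i : Fin m, (if (KplusAB m m).Adj (.inr j) (.inr i) then (1:ℝ) else 0) * v (Sum.inr i)) = 0
    from by simp [adj_rr]]
  simp [adj_rl]

lemma mulVec_inl (hm : 2 ≤ m) (v : (Fin m ⊕ Fin m) → ℝ) (i : Fin m) :
    ((KplusAB m m).adjMatrix ℝ *ᵥ v) (Sum.inl i) =
      (if i.val = 0 then v (Sum.inl ⟨1, by omega⟩)
        else if i.val = 1 then v (Sum.inl ⟨0, by omega⟩) else 0)
      + ∑ j : Fin m, v (Sum.inr j) := by
  simp only [Matrix.mulVec, dotProduct, Fintype.sum_sum_type, adjMatrix_apply]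
  congr 1
  · have key : ∀ j : Fin m,
        (if (KplusAB m m).Adj (.inl i) (.inl j) then (1:ℝ) else 0) * v (Sum.inl j)
        = (if i.val = 0 then (if j = (⟨1, by omega⟩ : Fin m) then v (Sum.inl j) else 0)
            else if i.val = 1 then (if j = (⟨0, by omega⟩ : Fin m) then v (Sum.inl j) else 0)
            else 0) := by
      intro j
      simp only [adj_ll]
      split_ifs <;> simp_all [Fin.ext_iff] <;> omega
    rw [Finset.sum_congr rfl (fun j _ => key j)]
    split_ifs with h0 h1
    · rw [Finset.sum_ite_eq' univ (⟨1, by omega⟩ : Fin m) (fun j => v (Sum.inl j))]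
      simp
    · rw [Finset.sum_ite_eq' univ (⟨0, by omega⟩ : Fin m) (fun j => v (Sum.inl j))]
      simp
    · simp
  · simp [adj_lr]

omit inst in
lemma key_lemma (hm : 2 ≤ m) :
    specRad (KplusAB m m) ^ 3 - specRad (KplusAB m m) ^ 2
      - (m:ℝ)^2 * specRad (KplusAB m m) + (m:ℝ)^2 - 2*(m:ℝ) = 0 ∧
    ∀ x : ℝ, x^3 - x^2 - (m:ℝ)^2*x + (m:ℝ)^2 - 2*(m:ℝ) = 0 → x ≤ specRad (KplusAB m m) := by
  have hM : (2:ℝ) ≤ (m:ℝ) := by exact_mod_cast hm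
  set M : ℝ := (m : ℝ) with hMdef
  set f : ℝ → ℝ := fun x => x^3 - x^2 - M^2*x + M^2 - 2*M with hf
  have hcont : Continuous f := by fun_prop
  have hfM : f M ≤ 0 := by simp only [hf]; nlinarith
  have hfM1 : 0 ≤ f (M+1) := by simp only [hf]; nlinarith
  have h0mem : (0:ℝ) ∈ Set.Icc (f M) (f (M+1)) := ⟨hfM, hfM1⟩
  obtain ⟨x0, hx0mem, hx0⟩ :=
    intermediate_value_Icc (by linarith : M ≤ M+1) hcont.continuousOn h0mem
  set S : Set ℝ := {x | f x = 0} with hS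
  have hSne : S.Nonempty := ⟨x0, hx0⟩
  have hub : ∀ x ∈ S, x ≤ M + 1 := by
    intro x hx
    by_contra hgt
    push_neg at hgt
    have hx' : f x = 0 := hx
    simp only [hf] at hx'
    have hfact : (x-1)*(x-M)*(x+M) = 2*M := by linear_combination hx'
    have hA : (0:ℝ) < x - 1 := by linarith
    have hB : (0:ℝ) < x - M := by linarith
    have hC : (0:ℝ) < x + M := by linarith
    have h1' : M ≤ (x-1)*(x-M) := by nlinarith
    have h2' : M*(x+M) ≤ (x-1)*(x-M)*(x+M) := mul_le_mul_of_nonneg_right h1' hC.le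
    have h3' : M*(2*M+1) ≤ M*(x+M) :=
      mul_le_mul_of_nonneg_left (by linarith) (by linarith)
    nlinarith [mul_nonneg (by linarith : (0:ℝ) ≤ M - 2) (by linarith : (0:ℝ) ≤ M)]
  have hSbdd : BddAbove S := ⟨M+1, hub⟩
  have hScl : IsClosed S := isClosed_eq hcont continuous_const
  set L : ℝ := sSup S with hL
  have hLroot : f L = 0 := hScl.csSup_mem hSne hSbdd
  have hLge : M ≤ L := le_trans hx0mem.1 (le_csSup hSbdd hx0)
  have main : ∀ (_ : DecidableEq (Fin m ⊕ Fin m)) (_ : DecidableRel (KplusAB m m).Adj),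
      L ∈ spectrum ℝ ((KplusAB m m).adjMatrix ℝ) ∧
      ∀ μ ∈ spectrum ℝ ((KplusAB m m).adjMatrix ℝ), μ ≤ L := by
    intro instE instR
    have hL0 : L ≠ 0 := by intro h; rw [h] at hLge; linarith
    have hL1 : L - 1 ≠ 0 := by intro h; nlinarith
    constructor
    · -- L is an eigenvalue
      rw [memSpec_iff]
      set a : ℝ := M / (L - 1) with ha
      set b : ℝ := M / L with hb
      refine ⟨Sum.elim (fun i : Fin m => if i.val = 0 ∨ i.val = 1 then a else b)
          (fun _ : Fin m => (1:ℝ)), ?_, ?_⟩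
      · intro h
        have := congrFun h (Sum.inr (⟨0, by omega⟩ : Fin m))
        simp at this
      · funext x
        have hSB : ∑ j : Fin m, (Sum.elim (fun i : Fin m => if i.val = 0 ∨ i.val = 1 then a else b)
            (fun _ : Fin m => (1:ℝ))) (Sum.inr j) = M := by
          simp [Finset.sum_const, hMdef]
        have hSA : ∑ i : Fin m, (Sum.elim (fun i : Fin m => if i.val = 0 ∨ i.val = 1 then a else b)
            (fun _ : Fin m => (1:ℝ))) (Sum.inl i) = M * b + 2*(a - b) := by
          have hsplit : ∀ i : Fin m, (if i.val = 0 ∨ i.val = 1 then a else b)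
              = b + ((if i = (⟨0, by omega⟩ : Fin m) then a - b else 0)
                  + (if i = (⟨1, by omega⟩ : Fin m) then a - b else 0)) := by
            intro i
            split_ifs <;> simp_all [Fin.ext_iff] <;> omega
          simp only [Sum.elim_inl]
          rw [Finset.sum_congr rfl (fun i _ => hsplit i), Finset.sum_add_distrib,
            Finset.sum_add_distrib,
            Finset.sum_ite_eq' univ (⟨0, by omega⟩ : Fin m) (fun _ => a - b),
            Finset.sum_ite_eq' univ (⟨1, by omega⟩ : Fin m) (fun _ => a - b)]
          simp [hMdef]
          ring
        cases x with
        | inl i =>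
          rw [mulVec_inl hm]
          by_cases hi0 : i.val = 0
          · simp only [hi0, if_pos, Sum.elim_inl, Pi.smul_apply, smul_eq_mul]
            rw [hSB]
            simp [hi0]
            rw [ha]
            field_simp
            ring
          · by_cases hi1 : i.val = 1
            · simp only [hi0, hi1, if_neg, if_pos, Sum.elim_inl, Pi.smul_apply, smul_eq_mul]
              rw [hSB]
              simp [hi0, hi1]
              rw [ha]
              field_simp
              ring
            · simp only [hi0, hi1, if_neg, Sum.elim_inl, Pi.smul_apply, smul_eq_mul]
              rw [hSB]
              simp [hi0, hi1, hb]
              field_simp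
        | inr j =>
          rw [mulVec_inr, hSA]
          simp only [Sum.elim_inr, Pi.smul_apply, smul_eq_mul, mul_one]
          rw [ha, hb]
          have hfL : L^3 - L^2 - M^2*L + M^2 - 2*M = 0 := hLroot
          field_simp
          linear_combination (-1) * hfL
    · -- upper bound
      intro μ hμ
      rw [memSpec_iff] at hμ
      obtain ⟨v, hv, heig⟩ := hμ
      have hE : ∀ x, ((KplusAB m m).adjMatrix ℝ *ᵥ v) x = μ * v x := by
        intro x; rw [heig]; simp
      set SA : ℝ := ∑ i : Fin m, v (Sum.inl i) with hSA
      set SB : ℝ := ∑ j : Fin m, v (Sum.inr j) with hSB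
      set i0 : Fin m := ⟨0, by omega⟩ with hi0
      set i1 : Fin m := ⟨1, by omega⟩ with hi1
      have hE0 : μ * v (Sum.inl i0) = v (Sum.inl i1) + SB := by
        have := hE (Sum.inl i0)
        rw [mulVec_inl hm] at this
        simpa [hi0, hi1, hSB] using this.symm
      have hE1 : μ * v (Sum.inl i1) = v (Sum.inl i0) + SB := by
        have := hE (Sum.inl i1)
        rw [mulVec_inl hm] at this
        simpa [hi0, hi1, hSB] using this.symm
      have hEi : ∀ i : Fin m, i.val ≠ 0 → i.val ≠ 1 → μ * v (Sum.inl i) = SB := by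
        intro i h0 h1
        have := hE (Sum.inl i)
        rw [mulVec_inl hm] at this
        simp only [h0, h1, if_neg, if_false] at this
        simpa using this.symm
      have hEj : ∀ j : Fin m, μ * v (Sum.inr j) = SA := by
        intro j
        have := hE (Sum.inr j)
        rw [mulVec_inr] at this
        exact this.symm
      set p : ℝ := v (Sum.inl i0) + v (Sum.inl i1) with hp
      have h2 : μ * SB = M * SA := by
        rw [hSB, Finset.mul_sum, Finset.sum_congr rfl (fun j _ => hEj j)]
        simp [hMdef]
      have h3 : μ * p = p + 2 * SB := by rw [hp]; ring_nf; nlinarith [hE0, hE1]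
      have h1 : μ * SA = p + M * SB := by
        have hterm : ∀ i : Fin m, μ * v (Sum.inl i) =
            ((if i = i0 then v (Sum.inl i1) else 0) + (if i = i1 then v (Sum.inl i0) else 0)) + SB := by
          intro i
          have hne01 : i0 ≠ i1 := by simp [hi0, hi1, Fin.ext_iff]
          by_cases hv0 : i.val = 0
          · have hieq : i = i0 := by simp [hi0, Fin.ext_iff, hv0]
            rw [hieq, if_pos rfl, if_neg hne01]
            simpa using hE0
          · by_cases hv1 : i.val = 1
            · have hieq : i = i1 := by simp [hi1, Fin.ext_iff, hv1]
              rw [hieq, if_neg (Ne.symm hne01), if_pos rfl]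
              simpa using hE1
            · have hne0 : i ≠ i0 := by simp [hi0, Fin.ext_iff, hv0]
              have hne1 : i ≠ i1 := by simp [hi1, Fin.ext_iff, hv1]
              rw [if_neg hne0, if_neg hne1]
              simpa using hEi i hv0 hv1
        rw [hSA, Finset.mul_sum, Finset.sum_congr rfl (fun i _ => hterm i),
          Finset.sum_add_distrib, Finset.sum_add_distrib,
          Finset.sum_ite_eq' univ i0 (fun _ => v (Sum.inl i1)),
          Finset.sum_ite_eq' univ i1 (fun _ => v (Sum.inl i0))]
        simp [hp, hMdef]
        ring
      by_cases hμ0 : μ = 0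
      · rw [hμ0]; linarith
      by_cases hμ1 : μ = -1
      · rw [hμ1]; linarith
      have hSBne : SB ≠ 0 := by
        intro hz
        have hSAz : SA = 0 := by
          have := h2
          rw [hz, mul_zero] at this
          have hMne : M ≠ 0 := by linarith
          field_simp at this
          exact (mul_eq_zero.mp this.symm).resolve_left hMne
        have hpz : p = 0 := by
          have := h1
          rw [hSAz, hz] at this
          linarith
        apply hv
        funext x
        have hpz' : v (Sum.inl i0) + v (Sum.inl i1) = 0 := by rw [← hp]; exact hpz
        have hz0 : (μ + 1) * v (Sum.inl i0) = 0 := by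
          linear_combination hE0 + hpz' + hz
        have hz1 : (μ + 1) * v (Sum.inl i1) = 0 := by
          linear_combination hE1 + hpz' + hz
        have hμ1' : μ + 1 ≠ 0 := fun h => hμ1 (by linarith)
        cases x with
        | inl i =>
          by_cases hv0 : i.val = 0
          · have hieq : i = i0 := by simp [hi0, Fin.ext_iff, hv0]
            rw [hieq]
            rcases mul_eq_zero.mp hz0 with h | h
            · exact absurd h hμ1'
            · exact h
          · by_cases hv1 : i.val = 1
            · have hieq : i = i1 := by simp [hi1, Fin.ext_iff, hv1]
              rw [hieq]
              rcases mul_eq_zero.mp hz1 with h | h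
              · exact absurd h hμ1'
              · exact h
            · have h := hEi i hv0 hv1
              rw [hz] at h
              rcases mul_eq_zero.mp h with h' | h'
              · exact absurd h' hμ0
              · exact h'
        | inr j =>
          have h := hEj j
          rw [hSAz] at h
          rcases mul_eq_zero.mp h with h' | h'
          · exact absurd h' hμ0
          · exact h'
      have hcomb : (μ^3 - μ^2 - M^2*μ + M^2 - 2*M) * SB = 0 := by
        linear_combination (μ^2 - μ)*h2 + (M*μ - M)*h1 + M*h3
      have hfμ : f μ = 0 := by
        rcases mul_eq_zero.mp hcomb with h | h
        · exact h
        · exact absurd h hSBne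
      exact le_csSup hSbdd hfμ
  have hR : specRad (KplusAB m m) = L := specRad_eq _ _ main
  rw [hR]
  exact ⟨hLroot, fun x hx => le_csSup hSbdd hx⟩

end Aux

theorem Kplus_even_char_poly (n : ℕ) (hn : 4 ≤ n) (hev : Even n) :
    (specRad (KplusAB (n / 2) (n / 2))) ^ 3 - (specRad (KplusAB (n / 2) (n / 2))) ^ 2
        - ((n : ℝ) ^ 2 / 4) * specRad (KplusAB (n / 2) (n / 2)) + (n : ℝ) ^ 2 / 4 - n = 0 ∧
      ∀ x : ℝ, x ^ 3 - x ^ 2 - ((n : ℝ) ^ 2 / 4) * x + (n : ℝ) ^ 2 / 4 - n = 0 →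
        x ≤ specRad (KplusAB (n / 2) (n / 2)) := by
  obtain ⟨m, rfl⟩ := hev
  have hm : 2 ≤ m := by omega
  have hdiv : (m + m) / 2 = m := by omega
  rw [hdiv]
  obtain ⟨h1, h2⟩ := key_lemma hm
  have hcast : ((m + m : ℕ) : ℝ) = 2 * (m : ℝ) := by push_cast; ring
  constructor
  · rw [hcast]
    linear_combination h1
  · intro x hx
    apply h2
    rw [hcast] at hx
    linear_combination hx
end

section
/- For every integer n ≥ 4, one has λ(K⁺_{⌊n/2⌋,⌈n/2⌉})² > ⌊n²/4⌋ + 2. -/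
open SimpleGraph Matrix

lemma rayleigh_bound {V : Type*} [Fintype V] [DecidableEq V] {M : Matrix V V ℝ}
    (hM : M.IsHermitian) (v : V → ℝ) :
    v ⬝ᵥ (M *ᵥ v) ≤ sSup (spectrum ℝ M) * (v ⬝ᵥ v) := by
  cases isEmpty_or_nonempty V
  · simp [dotProduct]
  set u : Matrix V V ℝ := (hM.eigenvectorUnitary : Matrix V V ℝ) with hu
  have hstar : (star u : Matrix V V ℝ) = uᵀ := by
    ext i j; simp [Matrix.star_apply]
  set w : V → ℝ := uᵀ *ᵥ v with hw
  have hsp : M = u * Matrix.diagonal hM.eigenvalues * uᵀ := by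
    have := hM.spectral_theorem
    rw [Unitary.conjStarAlgAut_apply, ← hu, hstar] at this
    simpa using this
  have huu : u * uᵀ = 1 := by
    have := (Matrix.mem_unitaryGroup_iff).mp hM.eigenvectorUnitary.2
    rwa [hstar] at this
  have hQ : v ⬝ᵥ (M *ᵥ v) = ∑ i, hM.eigenvalues i * (w i)^2 := by
    conv_lhs => rw [hsp]
    rw [← Matrix.mulVec_mulVec, ← Matrix.mulVec_mulVec, Matrix.dotProduct_mulVec,
      ← Matrix.mulVec_transpose]
    simp [dotProduct, Matrix.mulVec_diagonal, hw]
    ring_nf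
    exact Finset.sum_congr rfl fun i _ => mul_comm _ _
  have hN : v ⬝ᵥ v = ∑ i, (w i)^2 := by
    have : ∑ i, (w i)^2 = w ⬝ᵥ w := by simp [dotProduct, sq]
    rw [this, hw, Matrix.dotProduct_mulVec, ← Matrix.mulVec_transpose,
      Matrix.transpose_transpose, Matrix.mulVec_mulVec, huu, Matrix.one_mulVec]
  have hle : ∀ i, hM.eigenvalues i ≤ sSup (spectrum ℝ M) := fun i =>
    le_csSup (M.finite_spectrum.bddAbove) (hM.eigenvalues_mem_spectrum_real i)
  rw [hQ, hN, Finset.mul_sum]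
  exact Finset.sum_le_sum fun i _ => mul_le_mul_of_nonneg_right (hle i) (sq_nonneg _)

lemma KplusAB_adj_ll {a b : ℕ} (i j : Fin a) :
    (KplusAB a b).Adj (.inl i) (.inl j) ↔ ((i:ℕ)=0 ∧ (j:ℕ)=1) ∨ ((i:ℕ)=1 ∧ (j:ℕ)=0) := Iff.rfl
lemma KplusAB_adj_lr {a b : ℕ} (i : Fin a) (j : Fin b) :
    (KplusAB a b).Adj (.inl i) (.inr j) ↔ True := Iff.rfl
lemma KplusAB_adj_rl {a b : ℕ} (i : Fin b) (j : Fin a) :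
    (KplusAB a b).Adj (.inr i) (.inl j) ↔ True := Iff.rfl
lemma KplusAB_adj_rr {a b : ℕ} (i j : Fin b) :
    (KplusAB a b).Adj (.inr i) (.inr j) ↔ False := Iff.rfl

lemma sum_ind (m : ℕ) (hm : 2 ≤ m) (t : ℝ) :
    ∑ i : Fin m, ∑ j : Fin m,
      (if ((i:ℕ)=0 ∧ (j:ℕ)=1) ∨ ((i:ℕ)=1 ∧ (j:ℕ)=0) then t else 0) = 2*t := by
  have h0 : (0:ℕ) < m := by omega
  have h1 : (1:ℕ) < m := by omega
  set e0 : Fin m := ⟨0, h0⟩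
  set e1 : Fin m := ⟨1, h1⟩
  have key : ∀ i j : Fin m,
      (if ((i:ℕ)=0 ∧ (j:ℕ)=1) ∨ ((i:ℕ)=1 ∧ (j:ℕ)=0) then t else 0)
      = (if i = e0 then (if j = e1 then t else 0) else 0)
        + (if i = e1 then (if j = e0 then t else 0) else 0) := by
    intro i j
    have hi0 : i = e0 ↔ (i:ℕ) = 0 := by simp [Fin.ext_iff, e0]
    have hi1 : i = e1 ↔ (i:ℕ) = 1 := by simp [Fin.ext_iff, e1]
    have hj0 : j = e0 ↔ (j:ℕ) = 0 := by simp [Fin.ext_iff, e0]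
    have hj1 : j = e1 ↔ (j:ℕ) = 1 := by simp [Fin.ext_iff, e1]
    split_ifs <;> simp_all <;> omega
  have swap : ∀ c d : Fin m, (∑ i : Fin m, ∑ j : Fin m,
      (if i = c then (if j = d then t else 0) else 0)) = t := by
    intro c d
    have : ∀ i : Fin m, (∑ j : Fin m, if i = c then (if j = d then t else 0) else 0)
        = if i = c then t else 0 := by
      intro i
      split_ifs with h <;> simp [Finset.sum_ite_eq']
    simp_rw [this]
    simp [Finset.sum_ite_eq']
  simp_rw [key, Finset.sum_add_distrib, swap]
  ring

section comp
variable {a b : ℕ} [DecidableRel (KplusAB a b).Adj] (x z : ℝ)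

noncomputable def tv (x z : ℝ) : Fin a ⊕ Fin b → ℝ := Sum.elim (fun _ => x) (fun _ => z)

lemma tv_norm : (tv (a:=a) (b:=b) x z) ⬝ᵥ (tv x z) = a*x^2 + b*z^2 := by
  simp [tv, dotProduct, Fintype.sum_sum_type, Finset.sum_const, sq]

lemma tv_quad (ha : 2 ≤ a) :
    (tv (a:=a) (b:=b) x z) ⬝ᵥ ((KplusAB a b).adjMatrix ℝ *ᵥ (tv x z)) =
      2*x^2 + 2*a*b*(x*z) := by
  simp only [dotProduct, Matrix.mulVec, dotProduct, tv, Fintype.sum_sum_type,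
    Sum.elim_inl, Sum.elim_inr, adjMatrix_apply, KplusAB_adj_ll, KplusAB_adj_lr,
    KplusAB_adj_rl, KplusAB_adj_rr, if_true, if_false, ite_mul, one_mul, zero_mul,
    Finset.sum_const, Finset.card_univ, Fintype.card_fin, Finset.mul_sum,
    mul_ite, mul_zero, Finset.sum_add_distrib, nsmul_eq_mul]
  have step : ∀ i : Fin a,
      x * ((∑ j : Fin a, if (i:ℕ)=0 ∧ (j:ℕ)=1 ∨ (i:ℕ)=1 ∧ (j:ℕ)=0 then x else 0) + (b:ℝ)*z)
      = (∑ j : Fin a, if (i:ℕ)=0 ∧ (j:ℕ)=1 ∨ (i:ℕ)=1 ∧ (j:ℕ)=0 then x*x else 0) + x*((b:ℝ)*z) := by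
    intro i
    rw [mul_add, Finset.mul_sum]
    congr 1
    exact Finset.sum_congr rfl fun j _ => by split_ifs <;> ring
  simp_rw [step, Finset.sum_add_distrib, Finset.sum_const, Finset.card_univ, Fintype.card_fin,
    nsmul_eq_mul]
  rw [sum_ind a ha (x*x)]
  push_cast
  ring
end comp


lemma main_bound (a b : ℕ) (ha : 2 ≤ a) (x z : ℝ) (hx : 0 < x) (hz : 0 < z)
    (hkey : ((a:ℝ)*b+2) * ((a:ℝ)*x^2 + (b:ℝ)*z^2)^2 < (2*x^2 + 2*(a:ℝ)*(b:ℝ)*(x*z))^2) :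
    ((a:ℝ)*b + 2) < (specRad (KplusAB a b))^2 := by
  letI : DecidableEq (Fin a ⊕ Fin b) := Classical.decEq _
  letI : DecidableRel (KplusAB a b).Adj := Classical.decRel _
  have hspec : specRad (KplusAB a b) = sSup (spectrum ℝ ((KplusAB a b).adjMatrix ℝ)) := by
    unfold specRad
    rfl
  have hherm : ((KplusAB a b).adjMatrix ℝ).IsHermitian := by
    rw [Matrix.IsHermitian, Matrix.conjTranspose_eq_transpose_of_trivial]
    exact SimpleGraph.isSymm_adjMatrix _
  have hray := rayleigh_bound hherm (tv (a:=a) (b:=b) x z)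
  rw [tv_quad x z ha, tv_norm x z] at hray
  rw [hspec]
  have ha' : (1:ℝ) ≤ (a:ℝ) := by exact_mod_cast Nat.one_le_iff_ne_zero.mpr (by omega)
  have hb' : (0:ℝ) ≤ (b:ℝ) := Nat.cast_nonneg b
  have hN : (0:ℝ) < (a:ℝ)*x^2 + (b:ℝ)*z^2 := by nlinarith [sq_nonneg x, sq_nonneg z]
  have hQ : (0:ℝ) < 2*x^2 + 2*(a:ℝ)*(b:ℝ)*(x*z) := by
    have h1 := mul_nonneg (mul_nonneg (le_trans zero_le_one ha') hb') (mul_pos hx hz).le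
    nlinarith [pow_pos hx 2]
  nlinarith [mul_le_mul hray hray hQ.le (le_trans hQ.le hray), hkey, mul_pos hN hN]

theorem Kplus_sq_gt (n : ℕ) (hn : 4 ≤ n) :
    (specRad (KplusAB (n / 2) ((n + 1) / 2))) ^ 2 > ((n ^ 2 / 4 : ℕ) : ℝ) + 2 := by
  obtain ⟨m, hm | hm⟩ := Nat.even_or_odd' n
  · -- n = 2*m
    have hm2 : 2 ≤ m := by omega
    have h2 : n/2 = m := by omega
    have h3 : (n+1)/2 = m := by omega
    have hsq : n^2 = 4*(m*m) := by subst hm; ring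
    have hdiv : n^2/4 = m*m := by
      rw [hsq]; exact Nat.mul_div_cancel_left _ (by norm_num)
    rw [h2, h3, hdiv]
    have hM : (2:ℝ) ≤ (m:ℝ) := by exact_mod_cast hm2
    have := main_bound m m hm2 ((m:ℝ)^2) ((m:ℝ)^2 - 1) (by positivity) (by nlinarith)
      (by nlinarith [sq_nonneg ((m:ℝ)^2-2), pow_pos (lt_of_lt_of_le two_pos hM) 4,
        pow_pos (lt_of_lt_of_le two_pos hM) 6, pow_pos (lt_of_lt_of_le two_pos hM) 8])
    push_cast
    push_cast at this
    linarith
  · -- n = 2*m+1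
    have hm2 : 2 ≤ m := by omega
    have h2 : n/2 = m := by omega
    have h3 : (n+1)/2 = m+1 := by omega
    have hsq : n^2 = 4*(m*(m+1)) + 1 := by subst hm; ring
    have hdiv : n^2/4 = m*(m+1) := by
      generalize m*(m+1) = k at hsq ⊢
      omega
    rw [h2, h3, hdiv]
    have hM : (2:ℝ) ≤ (m:ℝ) := by exact_mod_cast hm2
    have := main_bound m (m+1) hm2 (2*(m:ℝ)+1) (2*(m:ℝ)) (by linarith) (by linarith)
      (by push_cast; nlinarith [pow_pos (lt_of_lt_of_le two_pos hM) 3,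
        pow_pos (lt_of_lt_of_le two_pos hM) 4, pow_pos (lt_of_lt_of_le two_pos hM) 5,
        sq_nonneg ((m:ℝ))])
    push_cast
    push_cast at this
    linarith
end

section
/- Let a ≥ 2 and b ≥ 1 be integers. Then λ(K⁺_{a,b}) is the largest real root of the polynomial f_{a,b}(x) = x³ − x² − abx + ab − 2b; that is, f_{a,b}(λ(K⁺_{a,b})) = 0 and every real root x of f_{a,b} satisfies x ≤ λ(K⁺_{a,b}). -/
open SimpleGraph

namespace KplusAux

open Matrix Finset

theorem mem_spec {n : Type*} [Fintype n] [DecidableEq n] (M : Matrix n n ℝ) (μ : ℝ)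
    (v : n → ℝ) (hv : v ≠ 0) (h : M *ᵥ v = μ • v) : μ ∈ spectrum ℝ M := by
  rw [spectrum.mem_iff]
  intro hu
  have h2 : (algebraMap ℝ (Matrix n n ℝ) μ - M) *ᵥ v = 0 := by
    rw [sub_mulVec, Matrix.algebraMap_eq_diagonal, h]
    ext i
    simp [mulVec_diagonal]
  obtain ⟨B, hB⟩ := hu
  have : v = 0 := by
    have h3 : ((↑B⁻¹ : Matrix n n ℝ) * (algebraMap ℝ (Matrix n n ℝ) μ - M)) *ᵥ v = v := by
      rw [← hB, Units.inv_mul, one_mulVec]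
    rw [← h3, ← mulVec_mulVec, h2, mulVec_zero]
  exact hv this

theorem spec_to_eig {n : Type*} [Fintype n] [DecidableEq n] (M : Matrix n n ℝ) (μ : ℝ)
    (h : μ ∈ spectrum ℝ M) : ∃ w : n → ℝ, w ≠ 0 ∧ M *ᵥ w = μ • w := by
  rw [spectrum.mem_iff] at h
  have hdet : (algebraMap ℝ (Matrix n n ℝ) μ - M).det = 0 := by
    by_contra hd
    exact h ((Matrix.isUnit_iff_isUnit_det _).2 (isUnit_iff_ne_zero.2 hd))
  obtain ⟨w, hw0, hw⟩ := (Matrix.exists_mulVec_eq_zero_iff).2 hdet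
  refine ⟨w, hw0, ?_⟩
  rw [sub_mulVec, Matrix.algebraMap_eq_diagonal, sub_eq_zero] at hw
  rw [← hw]; ext i; simp [mulVec_diagonal]

theorem perron_bound {n : Type*} [Fintype n] [DecidableEq n] (M : Matrix n n ℝ)
    (hM : Mᵀ = M) (h0 : ∀ i j, 0 ≤ M i j) (v : n → ℝ) (hv : ∀ i, 0 < v i)
    (r : ℝ) (hr : M *ᵥ v = r • v) (μ : ℝ) (w : n → ℝ) (hw : w ≠ 0)
    (hμ : M *ᵥ w = μ • w) : μ ≤ r := by
  set u : n → ℝ := fun i => |w i| with hu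
  have hS : 0 < ∑ i, v i * u i := by
    obtain ⟨i0, hi0⟩ := Function.ne_iff.1 hw
    refine Finset.sum_pos' (fun i _ => mul_nonneg (hv i).le (abs_nonneg _)) ⟨i0, mem_univ _, ?_⟩
    exact mul_pos (hv i0) (abs_pos.2 hi0)
  have key : |μ| * ∑ i, v i * u i ≤ r * ∑ i, v i * u i := by
    have step1 : ∀ i, |μ| * u i ≤ (M *ᵥ u) i := by
      intro i
      have : |μ * w i| = |(M *ᵥ w) i| := by rw [hμ]; simp
      calc |μ| * u i = |μ * w i| := (abs_mul _ _).symm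
        _ = |∑ j, M i j * w j| := by rw [this, mulVec, dotProduct]
        _ ≤ ∑ j, |M i j * w j| := Finset.abs_sum_le_sum_abs _ _
        _ = ∑ j, M i j * u j := by
            refine Finset.sum_congr rfl fun j _ => ?_
            rw [abs_mul, abs_of_nonneg (h0 i j)]
        _ = (M *ᵥ u) i := rfl
    calc |μ| * ∑ i, v i * u i = ∑ i, v i * (|μ| * u i) := by
          rw [Finset.mul_sum]; exact Finset.sum_congr rfl fun i _ => by ring
      _ ≤ ∑ i, v i * (M *ᵥ u) i := by
          refine Finset.sum_le_sum fun i _ => mul_le_mul_of_nonneg_left (step1 i) (hv i).le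
      _ = v ⬝ᵥ (M *ᵥ u) := rfl
      _ = (v ᵥ* M) ⬝ᵥ u := (dotProduct_mulVec _ _ _)
      _ = (M *ᵥ v) ⬝ᵥ u := by rw [← hM, mulVec_transpose, hM]
      _ = (r • v) ⬝ᵥ u := by rw [hr]
      _ = r * ∑ i, v i * u i := by simp [dotProduct, Finset.mul_sum, smul_eq_mul, mul_assoc]
  have := le_of_mul_le_mul_right (by linarith [key] : |μ| * (∑ i, v i * u i) ≤ r * (∑ i, v i * u i)) hS
  calc μ ≤ |μ| := le_abs_self μ
    _ ≤ r := this

noncomputable def rAB (a b : ℕ) : ℝ :=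
  sSup {x : ℝ | x ^ 3 - x ^ 2 - ((a : ℝ) * b) * x + (a : ℝ) * b - 2 * b = 0}

theorem roots_bdd (a b : ℕ) (ha : 2 ≤ a) (hb : 1 ≤ b) :
    BddAbove {x : ℝ | x ^ 3 - x ^ 2 - ((a : ℝ) * b) * x + (a : ℝ) * b - 2 * b = 0} := by
  have ha' : (2 : ℝ) ≤ a := by exact_mod_cast ha
  have hb' : (1 : ℝ) ≤ b := by exact_mod_cast hb
  refine ⟨(a : ℝ) * b + 1, fun x hx => ?_⟩
  simp only [Set.mem_setOf_eq] at hx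
  by_contra hgt
  push_neg at hgt
  have hc : (2:ℝ)*b ≤ (a:ℝ)*b := by nlinarith
  have hx1 : (a:ℝ)*b < x - 1 := by linarith
  have hx2 : (1:ℝ) ≤ x^2 - (a:ℝ)*b := by nlinarith
  have key : (a:ℝ)*b * 1 < (x-1)*(x^2 - (a:ℝ)*b) :=
    mul_lt_mul hx1 hx2 one_pos (by linarith)
  nlinarith [key]

theorem roots_nonempty (a b : ℕ) (ha : 2 ≤ a) (hb : 1 ≤ b) : ∃ x : ℝ, (3/2 : ℝ) ≤ x ∧
    x ^ 3 - x ^ 2 - ((a : ℝ) * b) * x + (a : ℝ) * b - 2 * b = 0 := by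
  have ha' : (2 : ℝ) ≤ a := by exact_mod_cast ha
  have hb' : (1 : ℝ) ≤ b := by exact_mod_cast hb
  set f : ℝ → ℝ := fun x => x ^ 3 - x ^ 2 - ((a : ℝ) * b) * x + (a : ℝ) * b - 2 * b with hf
  have hcont : ContinuousOn f (Set.Icc (3/2) ((a:ℝ)*b+1)) := by fun_prop
  have hle : (3/2 : ℝ) ≤ (a:ℝ)*b+1 := by nlinarith
  have h1 : f (3/2) ≤ 0 := by simp only [hf]; nlinarith
  have h2 : 0 ≤ f ((a:ℝ)*b+1) := by
    simp only [hf]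
    nlinarith [mul_le_mul ha' hb' (by linarith) (by linarith : (0:ℝ) ≤ (a:ℝ))]
  obtain ⟨x, hx, hfx⟩ := intermediate_value_Icc hle hcont ⟨h1, h2⟩
  exact ⟨x, hx.1, hfx⟩

theorem rAB_root (a b : ℕ) (ha : 2 ≤ a) (hb : 1 ≤ b) :
    (rAB a b) ^ 3 - (rAB a b) ^ 2 - ((a : ℝ) * b) * rAB a b + (a : ℝ) * b - 2 * b = 0 ∧
    (3/2 : ℝ) ≤ rAB a b ∧
    ∀ x : ℝ, x ^ 3 - x ^ 2 - ((a : ℝ) * b) * x + (a : ℝ) * b - 2 * b = 0 → x ≤ rAB a b := by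
  obtain ⟨x0, hx0, hx0r⟩ := roots_nonempty a b ha hb
  have hbd := roots_bdd a b ha hb
  have hne : {x : ℝ | x ^ 3 - x ^ 2 - ((a : ℝ) * b) * x + (a : ℝ) * b - 2 * b = 0}.Nonempty :=
    ⟨x0, hx0r⟩
  have hcl : IsClosed {x : ℝ | x ^ 3 - x ^ 2 - ((a : ℝ) * b) * x + (a : ℝ) * b - 2 * b = 0} := by
    have : Continuous fun x : ℝ => x ^ 3 - x ^ 2 - ((a : ℝ) * b) * x + (a : ℝ) * b - 2 * b := by
      fun_prop
    exact isClosed_eq this continuous_const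
  have hmem := hcl.csSup_mem hne hbd
  exact ⟨hmem, le_trans hx0 (le_csSup hbd hx0r), fun x hx => le_csSup hbd hx⟩

lemma adj_ll (a b : ℕ) (i j : Fin a) :
    (KplusAB a b).Adj (Sum.inl i) (Sum.inl j) ↔
      ((i.val = 0 ∧ j.val = 1) ∨ (i.val = 1 ∧ j.val = 0)) := Iff.rfl
lemma adj_lr (a b : ℕ) (i : Fin a) (k : Fin b) :
    (KplusAB a b).Adj (Sum.inl i) (Sum.inr k) ↔ True := Iff.rfl
lemma adj_rl (a b : ℕ) (i : Fin a) (k : Fin b) :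
    (KplusAB a b).Adj (Sum.inr k) (Sum.inl i) ↔ True := Iff.rfl
lemma adj_rr (a b : ℕ) (k l : Fin b) :
    (KplusAB a b).Adj (Sum.inr k) (Sum.inr l) ↔ False := Iff.rfl

lemma sum_ite_val (a m : ℕ) (hm : m < a) (c : ℝ) :
    (∑ x : Fin a, if x.val = m then c else 0) = c := by
  rw [Finset.sum_eq_single (⟨m, hm⟩ : Fin a)]
  · simp
  · intro x _ hx
    rw [if_neg (fun h => hx (Fin.ext h))]
  · intro h; exact absurd (mem_univ _) h

lemma sum_le_one (a : ℕ) (ha : 2 ≤ a) (c d : ℝ) :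
    (∑ x : Fin a, if x.val ≤ 1 then c else d) = 2 * c + ((a : ℝ) - 2) * d := by
  have : (∑ x : Fin a, if x.val ≤ 1 then c else d)
      = ∑ i ∈ Finset.range a, (if i ≤ 1 then c else d) :=
    Fin.sum_univ_eq_sum_range (fun i => if i ≤ 1 then c else d) a
  rw [this, ← Finset.sum_range_add_sum_Ico _ ha]
  have h1 : (∑ i ∈ Finset.range 2, (if i ≤ 1 then c else d)) = 2 * c := by
    simp [Finset.sum_range_succ]; ring
  have h2 : (∑ i ∈ Finset.Ico 2 a, (if i ≤ 1 then c else d)) = ((a : ℝ) - 2) * d := by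
    rw [Finset.sum_congr rfl (fun i hi => if_neg (by
      simp only [Finset.mem_Ico] at hi; omega))]
    rw [Finset.sum_const, Nat.card_Ico, nsmul_eq_mul, Nat.cast_sub ha]
    norm_num
  rw [h1, h2]

noncomputable def evec (a b : ℕ) (r : ℝ) : Fin a ⊕ Fin b → ℝ :=
  Sum.elim (fun i => if i.val ≤ 1 then (b:ℝ)/(r-1) else (b:ℝ)/r) (fun _ => 1)

theorem evec_eigen (a b : ℕ) (ha : 2 ≤ a) (hb : 1 ≤ b) (r : ℝ) (hr : (3/2:ℝ) ≤ r)
    (hroot : r ^ 3 - r ^ 2 - ((a : ℝ) * b) * r + (a : ℝ) * b - 2 * b = 0)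
    [inst : DecidableRel (KplusAB a b).Adj] :
    (KplusAB a b).adjMatrix ℝ *ᵥ evec a b r = r • evec a b r := by
  have hr0 : r ≠ 0 := by norm_num at hr ⊢; linarith
  have hr1 : r - 1 ≠ 0 := by norm_num at hr ⊢; intro h; nlinarith
  ext x
  cases x with
  | inl i =>
    simp only [mulVec, dotProduct, Fintype.sum_sum_type, adjMatrix_apply, evec, Sum.elim_inl,
      Sum.elim_inr, Pi.smul_apply, smul_eq_mul, adj_ll, adj_lr, iff_true, if_true, mul_one,
      ite_mul, one_mul, zero_mul]
    rw [Finset.sum_const, card_univ, Fintype.card_fin, nsmul_eq_mul, mul_one]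
    rcases Nat.lt_or_ge i.val 2 with hi | hi
    · have hile : i.val ≤ 1 := by omega
      have key : (∑ x : Fin a,
          if (i.val = 0 ∧ x.val = 1) ∨ (i.val = 1 ∧ x.val = 0) then
            (if x.val ≤ 1 then (b:ℝ)/(r-1) else (b:ℝ)/r) else 0) = (b:ℝ)/(r-1) := by
        rcases Nat.lt_or_ge i.val 1 with hi0 | hi1
        · have hi0 : i.val = 0 := by omega
          rw [Finset.sum_congr rfl (fun x _ => show _ = if x.val = 1 then (b:ℝ)/(r-1) else 0 by
            by_cases hx : x.val = 1 <;> simp [hx, hi0])]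
          exact sum_ite_val a 1 (by omega) _
        · have hi1 : i.val = 1 := by omega
          rw [Finset.sum_congr rfl (fun x _ => show _ = if x.val = 0 then (b:ℝ)/(r-1) else 0 by
            by_cases hx : x.val = 0 <;> simp [hx, hi1])]
          exact sum_ite_val a 0 (by omega) _
      rw [key, if_pos hile]
      field_simp
      ring
    · have hile : ¬ i.val ≤ 1 := by omega
      have key : (∑ x : Fin a,
          if (i.val = 0 ∧ x.val = 1) ∨ (i.val = 1 ∧ x.val = 0) then
            (if x.val ≤ 1 then (b:ℝ)/(r-1) else (b:ℝ)/r) else 0) = 0 := by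
        rw [Finset.sum_congr rfl (fun x _ => if_neg (by omega))]
        simp
      rw [key, if_neg hile]
      field_simp
      ring
  | inr k =>
    simp only [mulVec, dotProduct, Fintype.sum_sum_type, adjMatrix_apply, evec, Sum.elim_inl,
      Sum.elim_inr, Pi.smul_apply, smul_eq_mul, adj_rl, adj_rr, iff_true, if_true, iff_false,
      if_false, mul_one, one_mul, zero_mul, mul_zero]
    rw [sum_le_one a ha]
    rw [Finset.sum_const, smul_zero, add_zero]
    have ha' : (2:ℝ) ≤ (a:ℝ) := by exact_mod_cast ha
    have hb' : (1:ℝ) ≤ (b:ℝ) := by exact_mod_cast hb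
    field_simp
    ring_nf
    ring_nf at hroot
    linarith [hroot]

end KplusAux

open KplusAux Matrix Finset in
theorem Kplus_char_poly (a b : ℕ) (ha : 2 ≤ a) (hb : 1 ≤ b) :
    (specRad (KplusAB a b)) ^ 3 - (specRad (KplusAB a b)) ^ 2
        - ((a : ℝ) * b) * specRad (KplusAB a b) + (a : ℝ) * b - 2 * b = 0 ∧
      ∀ x : ℝ, x ^ 3 - x ^ 2 - ((a : ℝ) * b) * x + (a : ℝ) * b - 2 * b = 0 →
        x ≤ specRad (KplusAB a b) := by
  obtain ⟨hroot, hr32, hmax⟩ := rAB_root a b ha hb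
  set r := rAB a b with hrdef
  letI : DecidableEq (Fin a ⊕ Fin b) := Classical.decEq _
  letI : DecidableRel (KplusAB a b).Adj := Classical.decRel _
  have hspec : specRad (KplusAB a b) = sSup (spectrum ℝ ((KplusAB a b).adjMatrix ℝ)) := rfl
  set M := (KplusAB a b).adjMatrix ℝ with hM
  have hr0 : r ≠ 0 := by intro h; rw [h] at hr32; norm_num at hr32
  have hr1 : (0:ℝ) < r - 1 := by linarith
  have hb' : (0:ℝ) < (b:ℝ) := by exact_mod_cast hb
  have hsym : Mᵀ = M := SimpleGraph.transpose_adjMatrix (KplusAB a b)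
  have h0 : ∀ i j, 0 ≤ M i j := by
    intro i j
    rw [hM, adjMatrix_apply]
    split <;> norm_num
  have hvpos : ∀ x, 0 < evec a b r x := by
    rintro (i | k)
    · simp only [evec, Sum.elim_inl]
      split
      · exact div_pos hb' hr1
      · exact div_pos hb' (by linarith)
    · exact one_pos
  have hvne : evec a b r ≠ 0 := by
    intro h
    have := congrFun h (Sum.inr ⟨0, hb⟩)
    simp [evec] at this
  have heig : M *ᵥ evec a b r = r • evec a b r := evec_eigen a b ha hb r hr32 hroot
  have hrmem : r ∈ spectrum ℝ M := mem_spec M r _ hvne heig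
  have hub : ∀ μ ∈ spectrum ℝ M, μ ≤ r := by
    intro μ hμ
    obtain ⟨w, hw0, hw⟩ := spec_to_eig M μ hμ
    exact perron_bound M hsym h0 _ hvpos r heig μ w hw0 hw
  have hsup : sSup (spectrum ℝ M) = r :=
    le_antisymm (csSup_le ⟨r, hrmem⟩ hub) (le_csSup ⟨r, fun μ hμ => hub μ hμ⟩ hrmem)
  rw [hspec, hsup]
  exact ⟨hroot, hmax⟩
end

section
/- Let n ≥ 4 be an integer. Then λ(K₁ ∨ (K₃ ∪ I_{n−4})) is the largest real root of the polynomial p(x) = x³ − 2x² + (1 − n)x + 2n − 8; moreover, if n ≥ 7, then λ(K₁ ∨ (K₃ ∪ I_{n−4})) < n/2. -/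
open SimpleGraph

/-- `K₁ ∨ (K₃ ∪ I_s)` : apex vertex `0` joined to all others, vertices `1,2,3`
forming a triangle, and `s` further vertices with no other edges. -/
def coneTriangle (s : ℕ) : SimpleGraph (Fin (s + 4)) where
  Adj x y := x ≠ y ∧ (x.val = 0 ∨ y.val = 0 ∨ (x.val ≤ 3 ∧ y.val ≤ 3))
  symm := ⟨by rintro x y ⟨h1, h2⟩; exact ⟨h1.symm, by tauto⟩⟩
  loopless := ⟨by rintro x ⟨h1, _⟩; exact h1 rfl⟩

namespace CTaux

noncomputable def wvec (s : ℕ) (r : ℝ) : Fin (s+4) → ℝ :=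
  fun j => if j.val = 0 then r else if j.val ≤ 3 then r/(r-2) else 1

lemma wvec_pos {s : ℕ} {r : ℝ} (hr : 2 < r) (j : Fin (s+4)) : 0 < wvec s r j := by
  unfold wvec
  split_ifs with h1 h2
  · linarith
  · exact div_pos (by linarith) (by linarith)
  · norm_num

lemma sum_fin (s : ℕ) (h : Fin (s+4) → ℝ) (f : ℕ → ℝ) (hf : ∀ j, h j = f j.val) :
    ∑ j, h j = f 0 + f 1 + f 2 + f 3 + ∑ m ∈ Finset.Ico 4 (s+4), f m := by
  calc ∑ j, h j = ∑ j : Fin (s+4), f j.val := by simp [hf]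
    _ = ∑ m ∈ Finset.range (s+4), f m := Fin.sum_univ_eq_sum_range f (s+4)
    _ = ∑ m ∈ Finset.Ico 0 4, f m + ∑ m ∈ Finset.Ico 4 (s+4), f m := by
        rw [Finset.range_eq_Ico, Finset.sum_Ico_consecutive f (by omega) (by omega)]
    _ = _ := by
        rw [← Finset.range_eq_Ico]
        simp [Finset.sum_range_succ]

lemma mulVec_wvec {s : ℕ} {M : Matrix (Fin (s+4)) (Fin (s+4)) ℝ}
    (hM : ∀ i j, M i j = if (i.val ≠ j.val ∧ (i.val = 0 ∨ j.val = 0 ∨ (i.val ≤ 3 ∧ j.val ≤ 3)))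
        then 1 else 0)
    {r : ℝ} (hr : 2 < r)
    (hroot : r^3 - 2*r^2 - ((s:ℝ)+3)*r + 2*(s:ℝ) = 0) (i : Fin (s+4)) :
    M.mulVec (wvec s r) i = r * wvec s r i := by
  have hr2 : r - 2 ≠ 0 := by linarith
  have key : ∀ (g : ℕ → ℝ), (∀ j : Fin (s+4), M i j * wvec s r j = g j.val) →
      M.mulVec (wvec s r) i = g 0 + g 1 + g 2 + g 3 + ∑ m ∈ Finset.Ico 4 (s+4), g m := by
    intro g hg
    rw [Matrix.mulVec, dotProduct]
    exact sum_fin s _ g hg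
  by_cases h0 : i.val = 0
  · -- apex
    rw [key (fun m => if m = 0 then 0 else if m ≤ 3 then r/(r-2) else 1) ?_]
    · have hc : ∀ m ∈ Finset.Ico 4 (s+4),
          (fun m => if m = 0 then (0:ℝ) else if m ≤ 3 then r/(r-2) else 1) m = 1 := by
        intro m hm
        rw [Finset.mem_Ico] at hm
        beta_reduce
        rw [if_neg (by omega), if_neg (by omega)]
      rw [Finset.sum_congr rfl hc, Finset.sum_const, Nat.card_Ico]
      have hwi : wvec s r i = r := by unfold wvec; rw [if_pos h0]
      rw [hwi]
      norm_num
      field_simp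
      nlinarith [hroot]
    · intro j
      rw [hM]
      unfold wvec
      beta_reduce
      split_ifs <;> first | ring1 | (exfalso; omega)
  · by_cases h3 : i.val ≤ 3
    · -- triangle vertex
      rw [key (fun m => if m = i.val then 0 else if m = 0 then r
            else if m ≤ 3 then r/(r-2) else 0) ?_]
      · have hc : ∀ m ∈ Finset.Ico 4 (s+4),
            (fun m => if m = i.val then (0:ℝ) else if m = 0 then r
              else if m ≤ 3 then r/(r-2) else 0) m = 0 := by
          intro m hm
          rw [Finset.mem_Ico] at hm
          beta_reduce
          rw [if_neg (by omega), if_neg (by omega), if_neg (by omega)]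
        rw [Finset.sum_congr rfl hc, Finset.sum_const]
        have hwi : wvec s r i = r/(r-2) := by unfold wvec; rw [if_neg h0, if_pos h3]
        rw [hwi]
        have hcase : i.val = 1 ∨ i.val = 2 ∨ i.val = 3 := by omega
        rcases hcase with h|h|h <;>
          · simp only [h]
            norm_num
            field_simp
            ring
      · intro j
        rw [hM]
        unfold wvec
        beta_reduce
        split_ifs <;> first | ring1 | (exfalso; omega)
    · -- isolated vertex
      rw [key (fun m => if m = 0 then r else 0) ?_]
      · have hc : ∀ m ∈ Finset.Ico 4 (s+4),
            (fun m => if m = 0 then r else (0:ℝ)) m = 0 := by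
          intro m hm
          rw [Finset.mem_Ico] at hm
          beta_reduce
          rw [if_neg (by omega)]
        rw [Finset.sum_congr rfl hc, Finset.sum_const]
        have hwi : wvec s r i = 1 := by unfold wvec; rw [if_neg h0, if_neg h3]
        rw [hwi]
        norm_num
      · intro j
        rw [hM]
        unfold wvec
        beta_reduce
        split_ifs <;> first | ring1 | (exfalso; omega)
end CTaux

namespace CTaux

lemma ub_aux {s : ℕ} {M : Matrix (Fin (s+4)) (Fin (s+4)) ℝ}
    (hM : ∀ i j, M i j = if (i.val ≠ j.val ∧ (i.val = 0 ∨ j.val = 0 ∨ (i.val ≤ 3 ∧ j.val ≤ 3)))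
        then 1 else 0)
    {r : ℝ} (hr : 2 < r)
    (hroot : r^3 - 2*r^2 - ((s:ℝ)+3)*r + 2*(s:ℝ) = 0) (x : ℝ)
    (v : Fin (s+4) → ℝ) (hv0 : v ≠ 0) (hMv : M.mulVec v = x • v) : x ≤ r := by
  have hMnn : ∀ i j, 0 ≤ M i j := by
    intro i j; rw [hM]; split_ifs <;> norm_num
  have hMsym : ∀ i j, M i j = M j i := by
    intro i j; rw [hM, hM]
    by_cases h : (i.val ≠ j.val ∧ (i.val = 0 ∨ j.val = 0 ∨ (i.val ≤ 3 ∧ j.val ≤ 3)))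
    · rw [if_pos h, if_pos (by tauto)]
    · rw [if_neg h, if_neg (by tauto)]
  set w := wvec s r with hw
  have hAw : ∀ i, M.mulVec w i = r * w i := mulVec_wvec hM hr hroot
  set u : Fin (s+4) → ℝ := fun i => |v i| with hu
  have key1 : ∀ i, |x| * u i ≤ ∑ j, M i j * u j := by
    intro i
    have h1 : |x| * u i = |(M.mulVec v) i| := by
      rw [hMv]; simp [hu, abs_mul]
    rw [h1, Matrix.mulVec, dotProduct]
    calc |∑ j, M i j * v j| ≤ ∑ j, |M i j * v j| := Finset.abs_sum_le_sum_abs _ _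
      _ = ∑ j, M i j * u j := by
          refine Finset.sum_congr rfl fun j _ => ?_
          rw [abs_mul, abs_of_nonneg (hMnn i j)]
  have hchain : |x| * ∑ i, w i * u i ≤ r * ∑ i, w i * u i := by
    calc |x| * ∑ i, w i * u i = ∑ i, w i * (|x| * u i) := by
          rw [Finset.mul_sum]; exact Finset.sum_congr rfl fun i _ => by ring
      _ ≤ ∑ i, w i * (∑ j, M i j * u j) :=
          Finset.sum_le_sum fun i _ =>
            mul_le_mul_of_nonneg_left (key1 i) (wvec_pos hr i).le
      _ = ∑ i, ∑ j, w i * (M i j * u j) := by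
          exact Finset.sum_congr rfl fun i _ => Finset.mul_sum _ _ _
      _ = ∑ j, ∑ i, w i * (M i j * u j) := Finset.sum_comm
      _ = ∑ j, (M.mulVec w j) * u j := by
          refine Finset.sum_congr rfl fun j _ => ?_
          rw [Matrix.mulVec, dotProduct, Finset.sum_mul]
          exact Finset.sum_congr rfl fun i _ => by rw [hMsym i j]; ring
      _ = ∑ j, (r * w j) * u j := by
          exact Finset.sum_congr rfl fun j _ => by rw [hAw j]
      _ = r * ∑ i, w i * u i := by
          rw [Finset.mul_sum]; exact Finset.sum_congr rfl fun i _ => by ring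
  have hpos : 0 < ∑ i, w i * u i := by
    obtain ⟨i0, hi0⟩ : ∃ i, v i ≠ 0 := by
      by_contra hc; push_neg at hc; exact hv0 (funext fun i => hc i)
    refine Finset.sum_pos' (fun i _ => mul_nonneg (wvec_pos hr i).le (abs_nonneg _)) ?_
    exact ⟨i0, Finset.mem_univ _, mul_pos (wvec_pos hr i0) (abs_pos.2 hi0)⟩
  have habs : |x| ≤ r := le_of_mul_le_mul_right (by linarith [hchain]) hpos
  calc x ≤ |x| := le_abs_self x
    _ ≤ r := habs

end CTaux

open CTaux in
lemma specRad_eq_s10 (s : ℕ) (r : ℝ) (hr : 2 < r)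
    (hroot : r^3 - 2*r^2 - ((s:ℝ)+3)*r + 2*(s:ℝ) = 0) :
    specRad (coneTriangle s) = r := by
  letI : DecidableEq (Fin (s+4)) := Classical.decEq _
  letI : DecidableRel (coneTriangle s).Adj := Classical.decRel _
  unfold specRad
  have hAdj : ∀ i j : Fin (s+4), (coneTriangle s).Adj i j ↔
      (i.val ≠ j.val ∧ (i.val = 0 ∨ j.val = 0 ∨ (i.val ≤ 3 ∧ j.val ≤ 3))) := by
    intro i j
    constructor
    · rintro ⟨h1, h2⟩; exact ⟨fun he => h1 (Fin.ext he), h2⟩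
    · rintro ⟨h1, h2⟩; exact ⟨fun he => h1 (congrArg Fin.val he), h2⟩
  set M := (coneTriangle s).adjMatrix ℝ with hMdef
  have hM : ∀ i j, M i j = if (i.val ≠ j.val ∧ (i.val = 0 ∨ j.val = 0 ∨ (i.val ≤ 3 ∧ j.val ≤ 3)))
      then 1 else 0 := by
    intro i j
    rw [hMdef, SimpleGraph.adjMatrix_apply]
    by_cases h : (coneTriangle s).Adj i j
    · rw [if_pos h, if_pos ((hAdj i j).1 h)]
    · rw [if_neg h, if_neg (fun hc => h ((hAdj i j).2 hc))]
  have hAw : ∀ i, M.mulVec (wvec s r) i = r * wvec s r i := mulVec_wvec hM hr hroot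
  have hrmem : r ∈ spectrum ℝ M := by
    rw [spectrum.mem_iff]
    intro hu
    have hker : (algebraMap ℝ (Matrix (Fin (s+4)) (Fin (s+4)) ℝ) r - M).mulVec (wvec s r)
        = 0 := by
      funext i
      rw [Matrix.sub_mulVec, Algebra.algebraMap_eq_smul_one, Matrix.smul_mulVec,
        Matrix.one_mulVec]
      simp only [Pi.sub_apply, Pi.smul_apply, smul_eq_mul, Pi.zero_apply]
      rw [hAw i]; ring
    have hzero : wvec s r = 0 := by
      calc wvec s r = (1 : Matrix (Fin (s+4)) (Fin (s+4)) ℝ).mulVec (wvec s r) :=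
            (Matrix.one_mulVec _).symm
        _ = ((↑hu.unit⁻¹ : Matrix (Fin (s+4)) (Fin (s+4)) ℝ)
              * (algebraMap ℝ (Matrix (Fin (s+4)) (Fin (s+4)) ℝ) r - M)).mulVec (wvec s r) := by
            rw [IsUnit.val_inv_mul hu]
        _ = (↑hu.unit⁻¹ : Matrix (Fin (s+4)) (Fin (s+4)) ℝ).mulVec
              ((algebraMap ℝ (Matrix (Fin (s+4)) (Fin (s+4)) ℝ) r - M).mulVec (wvec s r)) := by
            rw [Matrix.mulVec_mulVec]
        _ = 0 := by rw [hker, Matrix.mulVec_zero]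
    have := congrFun hzero ⟨0, by omega⟩
    have hp := wvec_pos hr (s := s) ⟨0, by omega⟩
    rw [this] at hp
    exact lt_irrefl _ hp
  have hub : ∀ x ∈ spectrum ℝ M, x ≤ r := by
    intro x hx
    rw [spectrum.mem_iff] at hx
    have hdet : (algebraMap ℝ (Matrix (Fin (s+4)) (Fin (s+4)) ℝ) x - M).det = 0 := by
      by_contra hd
      exact hx ((Matrix.isUnit_iff_isUnit_det _).2 (isUnit_iff_ne_zero.2 hd))
    obtain ⟨v, hv0, hv⟩ := Matrix.exists_mulVec_eq_zero_iff.2 hdet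
    have hMv : M.mulVec v = x • v := by
      rw [Matrix.sub_mulVec, Algebra.algebraMap_eq_smul_one, Matrix.smul_mulVec,
        Matrix.one_mulVec, sub_eq_zero] at hv
      exact hv.symm
    exact ub_aux hM hr hroot x v hv0 hMv
  exact le_antisymm (csSup_le ⟨r, hrmem⟩ hub) (le_csSup ⟨r, hub⟩ hrmem)


theorem coneTriangle_char_poly (n : ℕ) (hn : 4 ≤ n) :
    ((specRad (coneTriangle (n - 4))) ^ 3 - 2 * (specRad (coneTriangle (n - 4))) ^ 2
          + (1 - (n : ℝ)) * specRad (coneTriangle (n - 4)) + 2 * n - 8 = 0 ∧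
        ∀ x : ℝ, x ^ 3 - 2 * x ^ 2 + (1 - (n : ℝ)) * x + 2 * n - 8 = 0 →
          x ≤ specRad (coneTriangle (n - 4))) ∧
      (7 ≤ n → specRad (coneTriangle (n - 4)) < (n : ℝ) / 2) := by
  have hsn : ((n - 4 : ℕ) : ℝ) = (n : ℝ) - 4 := by
    push_cast [Nat.cast_sub hn]; ring
  have hN : (4:ℝ) ≤ (n:ℝ) := by exact_mod_cast hn
  set N := (n:ℝ) with hNdef
  set S := {x : ℝ | x^3 - 2*x^2 + (1-N)*x + 2*N - 8 = 0} with hS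
  have hcont : Continuous fun x : ℝ => x^3 - 2*x^2 + (1-N)*x + 2*N - 8 := by continuity
  have hclosed : IsClosed S := isClosed_eq hcont continuous_const
  -- a root in (2, N]
  obtain ⟨c, hcmem, hcroot⟩ : ∃ c ∈ Set.Icc (2:ℝ) N, c^3 - 2*c^2 + (1-N)*c + 2*N - 8 = 0 := by
    have himg := intermediate_value_Icc (by linarith : (2:ℝ) ≤ N) hcont.continuousOn
    have h0mem : (0:ℝ) ∈ Set.Icc ((2:ℝ)^3 - 2*2^2 + (1-N)*2 + 2*N - 8)
        (N^3 - 2*N^2 + (1-N)*N + 2*N - 8) := by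
      constructor
      · nlinarith
      · nlinarith [sq_nonneg (N-4), sq_nonneg (N-1), mul_nonneg (by linarith : (0:ℝ) ≤ N - 4) (by linarith : (0:ℝ) ≤ N - 4)]
    obtain ⟨c, hc, hceq⟩ := himg h0mem
    exact ⟨c, hc, hceq⟩
  have hc2 : 2 < c := by
    rcases lt_or_eq_of_le hcmem.1 with h | h
    · exact h
    · exfalso; rw [← h] at hcroot; nlinarith
  have hub : ∀ x ∈ S, x ≤ N := by
    intro x hx
    by_contra hgt
    push_neg at hgt
    have hxe : x^3 - 2*x^2 + (1-N)*x + 2*N - 8 = 0 := hx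
    nlinarith [mul_nonneg (by linarith : (0:ℝ) ≤ x - N) (by linarith : (0:ℝ) ≤ x - 2),
      mul_nonneg (mul_nonneg (by linarith : (0:ℝ) ≤ x - 4) (by linarith : (0:ℝ) ≤ x - 4))
        (by linarith : (0:ℝ) ≤ x - 4), sq_nonneg (x - 4)]
  have hbdd : BddAbove S := ⟨N, hub⟩
  have hne : S.Nonempty := ⟨c, hcroot⟩
  have hrS : sSup S ∈ S := hclosed.csSup_mem hne hbdd
  set r := sSup S with hr
  have hreq : r^3 - 2*r^2 + (1-N)*r + 2*N - 8 = 0 := hrS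
  have hr2 : 2 < c ∧ c ≤ r := ⟨hc2, le_csSup hbdd hcroot⟩
  have hr2' : 2 < r := lt_of_lt_of_le hc2 hr2.2
  have hroot' : r^3 - 2*r^2 - (((n-4:ℕ):ℝ)+3)*r + 2*((n-4:ℕ):ℝ) = 0 := by
    rw [hsn]; linear_combination hreq
  have heq : specRad (coneTriangle (n-4)) = r := specRad_eq_s10 (n-4) r hr2' hroot'
  refine ⟨⟨?_, ?_⟩, ?_⟩
  · rw [heq]; linear_combination hreq
  · intro x hx
    rw [heq]
    exact le_csSup hbdd (by exact (by linear_combination hx : x^3 - 2*x^2 + (1-N)*x + 2*N - 8 = 0))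
  · intro h7
    have hN7 : (7:ℝ) ≤ N := by rw [hNdef]; exact_mod_cast h7
    rw [heq]
    by_contra hge
    push_neg at hge
    have ht : 0 ≤ 2*r - N := by linarith
    have hr72 : (7:ℝ)/2 ≤ r := by linarith
    nlinarith [mul_nonneg ht (by linarith : (0:ℝ) ≤ r - 2),
      mul_nonneg (by linarith : (0:ℝ) ≤ r - 7/2) (sq_nonneg (r - 1/4))]
end

section
/- λ(K₁ ∨ (K₃ ∪ I₁)) > 3 = (1 + √(4·7 − 3))/2; in particular, the conclusion of the theorem that every F₂-free graph G with m edges satisfies λ(G) ≤ (1 + √(4m − 3))/2 fails for m = 7. -/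
open SimpleGraph

/-- `H` has a copy (a subgraph isomorphic to it) inside `G`. -/
def ContainsCopy {α β : Type*} (H : SimpleGraph α) (G : SimpleGraph β) : Prop :=
  ∃ f : α → β, Function.Injective f ∧ ∀ x y, H.Adj x y → G.Adj (f x) (f y)

/-- The bowtie graph `F₂`: two triangles sharing exactly one vertex. -/
def bowtie : SimpleGraph (Fin 5) :=
  SimpleGraph.fromEdgeSet {s(0,1), s(0,2), s(1,2), s(0,3), s(0,4), s(3,4)}

/-- `G` is bowtie-free: it contains no subgraph isomorphic to `F₂`. -/
def BowtieFree {V : Type*} (G : SimpleGraph V) : Prop :=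
  ¬ ContainsCopy bowtie G

/-! ### Auxiliary material -/

instance coneTriangleOneDecidableAdj : DecidableRel (coneTriangle 1).Adj := fun a b =>
  decidable_of_iff (a ≠ b ∧ (a.val = 0 ∨ b.val = 0 ∨ (a.val ≤ 3 ∧ b.val ≤ 3))) Iff.rfl

lemma adjM (inst : DecidableRel (coneTriangle 1).Adj) :
    (coneTriangle 1).adjMatrix ℝ =
      !![0,1,1,1,1; 1,0,1,1,0; 1,1,0,1,0; 1,1,1,0,0; 1,0,0,0,0] := by
  ext i j
  fin_cases i <;> fin_cases j <;>
    simp (config := {decide := true}) [SimpleGraph.adjMatrix_apply, coneTriangle,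
      Matrix.vecHead, Matrix.vecTail]

/-- The adjacency matrix of `coneTriangle 1`. -/
noncomputable def Amat : Matrix (Fin 5) (Fin 5) ℝ :=
  !![0,1,1,1,1; 1,0,1,1,0; 1,1,0,1,0; 1,1,1,0,0; 1,0,0,0,0]

/-- The characteristic function `x ↦ det (x • 1 - Amat)`. -/
noncomputable def pchar (x : ℝ) : ℝ := ((algebraMap ℝ (Matrix (Fin 5) (Fin 5) ℝ)) x - Amat).det

lemma pchar_cont : Continuous pchar := by
  have h1 : Continuous fun x : ℝ => (algebraMap ℝ (Matrix (Fin 5) (Fin 5) ℝ)) x - Amat := by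
    simp only [Algebra.algebraMap_eq_smul_one]
    exact (continuous_id.smul continuous_const).sub continuous_const
  exact h1.matrix_det

lemma pchar_eval (x : ℝ) :
    pchar x = (!![x,-1,-1,-1,-1; -1,x,-1,-1,0; -1,-1,x,-1,0; -1,-1,-1,x,0; -1,0,0,0,x] :
      Matrix (Fin 5) (Fin 5) ℝ).det := by
  unfold pchar
  congr 1
  ext i j
  fin_cases i <;> fin_cases j <;>
    simp [Amat, Matrix.algebraMap_matrix_apply, Matrix.vecHead, Matrix.vecTail]

set_option maxRecDepth 10000 in
lemma pchar3 : pchar 3 = -16 := by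
  rw [pchar_eval]
  simp [Matrix.det_succ_row_zero, Fin.sum_univ_succ, Fin.succAbove_of_castSucc_lt,
    Fin.succAbove_of_le_castSucc]
  norm_num

set_option maxRecDepth 10000 in
lemma pchar4 : pchar 4 = 450 := by
  rw [pchar_eval]
  simp [Matrix.det_succ_row_zero, Fin.sum_univ_succ, Fin.succAbove_of_castSucc_lt,
    Fin.succAbove_of_le_castSucc]
  norm_num

set_option maxRecDepth 10000 in
lemma main5 : 3 < sSup (spectrum ℝ Amat) := by
  have ivt := intermediate_value_Ioo (by norm_num : (3:ℝ) ≤ 4) pchar_cont.continuousOn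
  have h0 : (0:ℝ) ∈ Set.Ioo (pchar 3) (pchar 4) := by rw [pchar3, pchar4]; norm_num
  obtain ⟨μ, hμmem, hμ0⟩ := ivt h0
  have hmem : μ ∈ spectrum ℝ Amat := by
    rw [spectrum.mem_iff]
    intro hunit
    rw [Matrix.isUnit_iff_isUnit_det] at hunit
    rw [show ((algebraMap ℝ (Matrix (Fin 5) (Fin 5) ℝ)) μ - Amat).det = pchar μ from rfl,
      hμ0] at hunit
    exact hunit.ne_zero rfl
  have hle : μ ≤ sSup (spectrum ℝ Amat) :=
    le_csSup (Amat.finite_spectrum).bddAbove hmem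
  linarith [hμmem.1]

lemma edge_count : (coneTriangle 1).edgeSet.ncard = 7 := by
  rw [← SimpleGraph.coe_edgeFinset, Set.ncard_coe_finset]
  decide

lemma bowtie_free : BowtieFree (coneTriangle 1) := by
  rintro ⟨f, hinj, hadj⟩
  have b01 : bowtie.Adj 0 1 := by rw [bowtie, SimpleGraph.fromEdgeSet_adj]; simp
  have b02 : bowtie.Adj 0 2 := by rw [bowtie, SimpleGraph.fromEdgeSet_adj]; simp
  have b12 : bowtie.Adj 1 2 := by rw [bowtie, SimpleGraph.fromEdgeSet_adj]; simp
  have b03 : bowtie.Adj 0 3 := by rw [bowtie, SimpleGraph.fromEdgeSet_adj]; simp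
  have b04 : bowtie.Adj 0 4 := by rw [bowtie, SimpleGraph.fromEdgeSet_adj]; simp
  have b34 : bowtie.Adj 3 4 := by rw [bowtie, SimpleGraph.fromEdgeSet_adj]; simp
  set p4 : Fin (1 + 4) := ⟨4, by omega⟩ with hp4
  have key : ∀ x : Fin (1 + 4), (coneTriangle 1).Adj x p4 → x = ⟨0, by omega⟩ := by
    rintro x ⟨hne, h⟩
    rcases h with h | h | ⟨_, h⟩
    · exact Fin.ext h
    · simp [hp4] at h
    · simp [hp4] at h
  have hsurj : Function.Surjective f := Finite.injective_iff_surjective.mp hinj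
  obtain ⟨v, hv⟩ := hsurj p4
  have tri : ∀ a b : Fin 5, bowtie.Adj a v → bowtie.Adj b v → a ≠ b → False := by
    intro a b ha hb hab
    have ha' := hadj a v ha; have hb' := hadj b v hb
    rw [hv] at ha' hb'
    have := key _ ha'; have := key _ hb'
    exact hab (hinj (by rw [‹f a = _›, ‹f b = _›]))
  fin_cases v
  · exact tri 1 2 (bowtie.adj_symm b01) (bowtie.adj_symm b02) (by decide)
  · exact tri 0 2 b01 (bowtie.adj_symm b12) (by decide)
  · exact tri 0 1 b02 b12 (by decide)
  · exact tri 0 4 b03 (bowtie.adj_symm b34) (by decide)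
  · exact tri 0 3 b04 b34 (by decide)

set_option maxRecDepth 10000 in
lemma specRad_gt : specRad (coneTriangle 1) > 3 := by
  unfold specRad
  rw [adjM]
  rw [show (Classical.decEq (Fin (1+4))) = (instDecidableEqFin 5) from Subsingleton.elim _ _]
  exact main5

theorem bowtie_size_bound_fails_at_seven :
    (1 + Real.sqrt (4 * 7 - 3)) / 2 = 3 ∧
      (coneTriangle 1).edgeSet.ncard = 7 ∧
      BowtieFree (coneTriangle 1) ∧
      specRad (coneTriangle 1) > 3 := by
  refine ⟨?_, edge_count, bowtie_free, specRad_gt⟩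
  rw [show (4 * 7 - 3 : ℝ) = 5 ^ 2 by norm_num,
    Real.sqrt_sq (by norm_num : (0:ℝ) ≤ 5)]
  norm_num
end

section
/- Let m ≥ 8 be an integer. Then λ(K₁ ∨ (K₃ ∪ I_{m−6})) is the largest real root of the polynomial h(x) = x³ − 2x² + (3 − m)x + 2m − 12, and λ(K₁ ∨ (K₃ ∪ I_{m−6})) < (1 + √(4m − 3))/2. -/
open SimpleGraph Finset Matrix

lemma beta_facts (M : ℝ) (hM : 8 ≤ M) :
    ((1+Real.sqrt (4*M-3))/2)^2 = (1+Real.sqrt (4*M-3))/2 + M - 1 ∧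
      3 < (1+Real.sqrt (4*M-3))/2 := by
  have hsq : (Real.sqrt (4*M-3))^2 = 4*M-3 := Real.sq_sqrt (by linarith)
  have hnn := Real.sqrt_nonneg (4*M-3)
  constructor
  · nlinarith [hsq]
  · nlinarith [hsq, hnn]

lemma h_pos (M : ℝ) (hM : 8 ≤ M) (b : ℝ) (hb2 : b^2 = b + M - 1) (hb3 : 3 < b)
    (x : ℝ) (hx : b ≤ x) :
    0 < x^3 - 2*x^2 + (3-M)*x + 2*M - 12 := by
  have ha : 0 ≤ x - b := by linarith
  have h4 : (0:ℝ) < x + 2*b - 2 := by linarith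
  have h5 : (0:ℝ) < 2*b^2 - 3*b + 2 := by nlinarith
  have h6 : (0:ℝ) < b^2 - 10 := by nlinarith
  nlinarith [mul_nonneg (mul_nonneg ha ha) h4.le, mul_nonneg ha h5.le, h6, hb2,
    mul_nonneg ha (by linarith : (0:ℝ) ≤ b - 3)]


noncomputable def uu (s : ℕ) (v : Fin (s+4) → ℝ) (k : ℕ) : ℝ :=
  if h : k < s + 4 then v ⟨k, h⟩ else 0

lemma mulVec_apply (s : ℕ) [inst : DecidableRel (coneTriangle s).Adj]
    (v : Fin (s+4) → ℝ) (i : Fin (s+4)) :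
    ((coneTriangle s).adjMatrix ℝ *ᵥ v) i =
      if i.val = 0 then (uu s v 1 + uu s v 2 + uu s v 3) + ∑ k ∈ Finset.Ico 4 (s+4), uu s v k
      else if i.val ≤ 3 then uu s v 0 + ((uu s v 1 + uu s v 2 + uu s v 3) - uu s v i.val)
      else uu s v 0 := by
  have step1 : ((coneTriangle s).adjMatrix ℝ *ᵥ v) i =
      ∑ j : Fin (s+4), (fun k : ℕ =>
        if ((i : ℕ) ≠ k ∧ ((i : ℕ) = 0 ∨ k = 0 ∨ ((i : ℕ) ≤ 3 ∧ k ≤ 3))) then uu s v k else 0)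
        (j : ℕ) := by
    rw [Matrix.mulVec]
    simp only [dotProduct, adjMatrix_apply, ite_mul, one_mul, zero_mul]
    refine Finset.sum_congr rfl (fun j _ => ?_)
    have hj : uu s v (j : ℕ) = v j := by
      rw [uu, dif_pos j.isLt]
    simp only [hj, coneTriangle]
    congr 1
    simp only [Ne, Fin.val_inj]
  have step2 := Fin.sum_univ_eq_sum_range (fun k : ℕ =>
    if ((i : ℕ) ≠ k ∧ ((i : ℕ) = 0 ∨ k = 0 ∨ ((i : ℕ) ≤ 3 ∧ k ≤ 3))) then uu s v k else 0) (s+4)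
  rw [step1, step2]
  rw [Finset.range_eq_Ico, ← Finset.sum_Ico_consecutive _ (by omega : 0 ≤ 4) (by omega : 4 ≤ s+4),
    ← Finset.range_eq_Ico, Finset.sum_range_succ, Finset.sum_range_succ, Finset.sum_range_succ,
    Finset.sum_range_one]
  have hv : (i:ℕ) = 0 ∨ (i:ℕ) = 1 ∨ (i:ℕ) = 2 ∨ (i:ℕ) = 3 ∨ 4 ≤ (i:ℕ) := by omega
  rcases hv with h | h | h | h | h
  · rw [h]
    rw [Finset.sum_congr rfl (fun k hk => if_pos (by simp only [Finset.mem_Ico] at hk; omega) :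
      ∀ k ∈ Finset.Ico 4 (s+4), (if ((0:ℕ) ≠ k ∧ ((0:ℕ) = 0 ∨ k = 0 ∨ ((0:ℕ) ≤ 3 ∧ k ≤ 3))) then uu s v k else 0) = uu s v k)]
    norm_num
  · rw [h]
    rw [Finset.sum_eq_zero (fun k hk => if_neg (by simp only [Finset.mem_Ico] at hk; omega) :
      ∀ k ∈ Finset.Ico 4 (s+4), (if ((1:ℕ) ≠ k ∧ ((1:ℕ) = 0 ∨ k = 0 ∨ ((1:ℕ) ≤ 3 ∧ k ≤ 3))) then uu s v k else 0) = 0)]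
    norm_num
    try ring
  · rw [h]
    rw [Finset.sum_eq_zero (fun k hk => if_neg (by simp only [Finset.mem_Ico] at hk; omega) :
      ∀ k ∈ Finset.Ico 4 (s+4), (if ((2:ℕ) ≠ k ∧ ((2:ℕ) = 0 ∨ k = 0 ∨ ((2:ℕ) ≤ 3 ∧ k ≤ 3))) then uu s v k else 0) = 0)]
    norm_num
    try ring
  · rw [h]
    rw [Finset.sum_eq_zero (fun k hk => if_neg (by simp only [Finset.mem_Ico] at hk; omega) :
      ∀ k ∈ Finset.Ico 4 (s+4), (if ((3:ℕ) ≠ k ∧ ((3:ℕ) = 0 ∨ k = 0 ∨ ((3:ℕ) ≤ 3 ∧ k ≤ 3))) then uu s v k else 0) = 0)]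
    norm_num
    try ring
  · have h1 : ¬ (i:ℕ) = 0 := by omega
    have h3 : ¬ (i:ℕ) ≤ 3 := by omega
    rw [if_neg h1, if_neg h3]
    rw [Finset.sum_eq_zero (fun k hk => if_neg (by simp only [Finset.mem_Ico] at hk; omega) :
      ∀ k ∈ Finset.Ico 4 (s+4), (if ((i:ℕ) ≠ k ∧ ((i:ℕ) = 0 ∨ k = 0 ∨ ((i:ℕ) ≤ 3 ∧ k ≤ 3))) then uu s v k else 0) = 0)]
    have e0 : ((i:ℕ) ≠ 0 ∧ ((i:ℕ) = 0 ∨ (0:ℕ) = 0 ∨ ((i:ℕ) ≤ 3 ∧ (0:ℕ) ≤ 3))) := by omega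
    rw [if_pos e0, if_neg (by omega), if_neg (by omega), if_neg (by omega)]
    ring

lemma mem_spec_iff' {n : Type*} [Fintype n] [DecidableEq n] (A : Matrix n n ℝ) (μ : ℝ) :
    μ ∈ spectrum ℝ A ↔ ∃ v, v ≠ 0 ∧ A.mulVec v = μ • v := by
  rw [spectrum.mem_iff]
  have h1 : (algebraMap ℝ (Matrix n n ℝ)) μ - A = μ • (1 : Matrix n n ℝ) - A := by
    simp [Algebra.algebraMap_eq_smul_one]
  rw [h1, Matrix.isUnit_iff_isUnit_det, isUnit_iff_ne_zero, not_not,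
    ← Matrix.exists_mulVec_eq_zero_iff]
  constructor
  · rintro ⟨v, hv, h⟩
    rw [Matrix.sub_mulVec, Matrix.smul_mulVec, Matrix.one_mulVec] at h
    exact ⟨v, hv, (sub_eq_zero.mp h).symm⟩
  · rintro ⟨v, hv, h⟩
    refine ⟨v, hv, ?_⟩
    rw [Matrix.sub_mulVec, Matrix.smul_mulVec, Matrix.one_mulVec, h, sub_self]

lemma root_mem_spectrum (s : ℕ) (hs : 0 < s) [instE : DecidableEq (Fin (s+4))] [inst : DecidableRel (coneTriangle s).Adj]
    (x : ℝ) (hx : x^3 - 2*x^2 - (3+(s:ℝ))*x + 2*s = 0) :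
    x ∈ spectrum ℝ ((coneTriangle s).adjMatrix ℝ) := by
  have hx0 : x ≠ 0 := by
    rintro rfl
    have hs' : (0:ℝ) < (s:ℝ) := by exact_mod_cast hs
    nlinarith [hx]
  rw [mem_spec_iff']
  set v : Fin (s+4) → ℝ := fun j => if (j:ℕ) = 0 then x*(x-2) else if (j:ℕ) ≤ 3 then x else x - 2
    with hvdef
  have hu : ∀ k, (h : k < s+4) → uu s v k =
      if k = 0 then x*(x-2) else if k ≤ 3 then x else x - 2 := by
    intro k h; rw [uu, dif_pos h]
  have hu0 : uu s v 0 = x*(x-2) := by rw [hu 0 (by omega)]; norm_num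
  have hu1 : uu s v 1 = x := by rw [hu 1 (by omega)]; norm_num
  have hu2 : uu s v 2 = x := by rw [hu 2 (by omega)]; norm_num
  have hu3 : uu s v 3 = x := by rw [hu 3 (by omega)]; norm_num
  have hS : ∑ k ∈ Finset.Ico 4 (s+4), uu s v k = s * (x - 2) := by
    rw [Finset.sum_congr rfl (fun k hk => by
      simp only [Finset.mem_Ico] at hk
      rw [hu k (by omega), if_neg (by omega), if_neg (by omega)] :
      ∀ k ∈ Finset.Ico 4 (s+4), uu s v k = x - 2)]
    rw [Finset.sum_const, Nat.card_Ico]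
    simp [nsmul_eq_mul]
  refine ⟨v, ?_, ?_⟩
  · intro h0
    have h1 := congrFun h0 ⟨1, by omega⟩
    simp only [hvdef, Pi.zero_apply] at h1
    norm_num at h1
    exact hx0 h1
  · funext i
    rw [mulVec_apply, Pi.smul_apply, smul_eq_mul]
    have hvi : v i = uu s v (i:ℕ) := by rw [uu, dif_pos i.isLt]
    rw [hvi]
    have hc : (i:ℕ) = 0 ∨ (1 ≤ (i:ℕ) ∧ (i:ℕ) ≤ 3) ∨ 4 ≤ (i:ℕ) := by omega
    rcases hc with h | h | h
    · rw [if_pos h, h, hu0, hu1, hu2, hu3, hS]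
      linear_combination -hx
    · rw [if_neg (by omega), if_pos (by omega), hu0, hu1, hu2, hu3,
        hu (i:ℕ) i.isLt, if_neg (by omega), if_pos (by omega)]
      ring
    · rw [if_neg (by omega), if_neg (by omega), hu0, hu (i:ℕ) i.isLt,
        if_neg (by omega), if_neg (by omega)]

lemma spectrum_cases (s : ℕ) [instE : DecidableEq (Fin (s+4))] [inst : DecidableRel (coneTriangle s).Adj] (μ : ℝ)
    (hμ : μ ∈ spectrum ℝ ((coneTriangle s).adjMatrix ℝ)) :
    μ^3 - 2*μ^2 - (3+(s:ℝ))*μ + 2*(s:ℝ) = 0 ∨ μ = 0 ∨ μ = -1 := by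
  rw [mem_spec_iff'] at hμ
  obtain ⟨v, hv, hev⟩ := hμ
  have heq : ∀ i : Fin (s+4),
      (if (i:ℕ) = 0 then (uu s v 1 + uu s v 2 + uu s v 3) + ∑ k ∈ Finset.Ico 4 (s+4), uu s v k
      else if (i:ℕ) ≤ 3 then uu s v 0 + ((uu s v 1 + uu s v 2 + uu s v 3) - uu s v (i:ℕ))
      else uu s v 0) = μ * uu s v (i:ℕ) := by
    intro i
    rw [← mulVec_apply, hev, Pi.smul_apply, smul_eq_mul, uu, dif_pos i.isLt]
  set a := uu s v 0 with ha
  set T := uu s v 1 + uu s v 2 + uu s v 3 with hT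
  set S := ∑ k ∈ Finset.Ico 4 (s+4), uu s v k with hSdef
  have E0 : T + S = μ * a := by
    have := heq ⟨0, by omega⟩
    rwa [if_pos rfl] at this
  have E1 : a + (T - uu s v 1) = μ * uu s v 1 := by
    have := heq ⟨1, by omega⟩
    rwa [if_neg (by norm_num), if_pos (by norm_num)] at this
  have E2 : a + (T - uu s v 2) = μ * uu s v 2 := by
    have := heq ⟨2, by omega⟩
    rwa [if_neg (by norm_num), if_pos (by norm_num)] at this
  have E3 : a + (T - uu s v 3) = μ * uu s v 3 := by
    have := heq ⟨3, by omega⟩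
    rwa [if_neg (by norm_num), if_pos (by norm_num)] at this
  have Etail : ∀ k, 4 ≤ k → (hk : k < s+4) → a = μ * uu s v k := by
    intro k h4 hk
    have := heq ⟨k, hk⟩
    rwa [if_neg (by simpa using by omega), if_neg (by simpa using by omega)] at this
  have eT : μ * T = 3*a + 2*T := by rw [hT]; linear_combination -E1 - E2 - E3
  have eS : μ * S = (s:ℝ) * a := by
    rw [hSdef, Finset.mul_sum]
    rw [Finset.sum_congr rfl (fun k hk => by
      simp only [Finset.mem_Ico] at hk
      exact (Etail k hk.1 hk.2).symm : ∀ k ∈ Finset.Ico 4 (s+4), μ * uu s v k = a)]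
    rw [Finset.sum_const, Nat.card_Ico]
    simp [nsmul_eq_mul]
  have e0 : μ * a = T + S := E0.symm
  by_cases hA : a ≠ 0
  · left
    have key : (μ^3 - 2*μ^2 - (3+(s:ℝ))*μ + 2*(s:ℝ)) * a = 0 := by
      linear_combination (μ*(μ-2))*e0 + μ*eT + (μ-2)*eS
    rcases mul_eq_zero.mp key with h | h
    · exact h
    · exact absurd h hA
  · push_neg at hA
    by_cases h0 : μ = 0
    · right; left; exact h0
    by_cases h1 : μ = -1
    · right; right; exact h1
    exfalso
    apply hv
    have utail : ∀ k, 4 ≤ k → (hk : k < s+4) → uu s v k = 0 := by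
      intro k h4 hk
      have := Etail k h4 hk
      rw [hA] at this
      field_simp at this
      exact (mul_eq_zero.mp this.symm).resolve_left h0
    have hS0 : S = 0 := by
      rw [hSdef]
      exact Finset.sum_eq_zero (fun k hk => by
        simp only [Finset.mem_Ico] at hk; exact utail k hk.1 hk.2)
    have hT0 : T = 0 := by
      have := E0
      rw [hS0, hA, mul_zero, add_zero] at this
      exact this
    have hzero : ∀ t : ℕ, t = 1 ∨ t = 2 ∨ t = 3 → uu s v t = 0 := by
      intro t ht
      have hmu1 : μ + 1 ≠ 0 := fun hc => h1 (by linarith)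
      rcases ht with rfl | rfl | rfl
      · have key : (μ + 1) * uu s v 1 = 0 := by linear_combination -E1 + hT0 + hA
        exact (mul_eq_zero.mp key).resolve_left hmu1
      · have key : (μ + 1) * uu s v 2 = 0 := by linear_combination -E2 + hT0 + hA
        exact (mul_eq_zero.mp key).resolve_left hmu1
      · have key : (μ + 1) * uu s v 3 = 0 := by linear_combination -E3 + hT0 + hA
        exact (mul_eq_zero.mp key).resolve_left hmu1
    funext j
    have hvj : v j = uu s v (j:ℕ) := by rw [uu, dif_pos j.isLt]
    rw [Pi.zero_apply, hvj]
    have hc : (j:ℕ) = 0 ∨ (j:ℕ) = 1 ∨ (j:ℕ) = 2 ∨ (j:ℕ) = 3 ∨ 4 ≤ (j:ℕ) := by omega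
    rcases hc with h | h | h | h | h
    · rw [h]; exact hA
    · rw [h]; exact hzero 1 (by tauto)
    · rw [h]; exact hzero 2 (by tauto)
    · rw [h]; exact hzero 3 (by tauto)
    · exact utail _ h j.isLt

theorem coneTriangle_size_char_poly (m : ℕ) (hm : 8 ≤ m) :
    ((specRad (coneTriangle (m - 6))) ^ 3 - 2 * (specRad (coneTriangle (m - 6))) ^ 2
          + (3 - (m : ℝ)) * specRad (coneTriangle (m - 6)) + 2 * m - 12 = 0 ∧
        ∀ x : ℝ, x ^ 3 - 2 * x ^ 2 + (3 - (m : ℝ)) * x + 2 * m - 12 = 0 →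
          x ≤ specRad (coneTriangle (m - 6))) ∧
      specRad (coneTriangle (m - 6)) < (1 + Real.sqrt (4 * m - 3)) / 2 := by
  set s := m - 6 with hs
  have hM : (8:ℝ) ≤ (m:ℝ) := by exact_mod_cast hm
  set M := (m:ℝ) with hMdef
  have hs6 : (s:ℝ) = M - 6 := by
    rw [hs, hMdef, Nat.cast_sub (by omega : 6 ≤ m)]; norm_num
  set b := (1+Real.sqrt (4*M-3))/2 with hbdef
  obtain ⟨hb2, hb3⟩ := beta_facts M hM
  set R : Set ℝ := {x | x^3 - 2*x^2 + (3-M)*x + 2*M - 12 = 0} with hR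
  have hcont : Continuous fun x : ℝ => x^3 - 2*x^2 + (3-M)*x + 2*M - 12 := by continuity
  have hclosed : IsClosed R := isClosed_eq hcont continuous_const
  have hub : ∀ x ∈ R, x < b := by
    intro x hx
    by_contra hc
    push_neg at hc
    have hp := h_pos M hM b hb2 hb3 x hc
    have hx' : x^3 - 2*x^2 + (3-M)*x + 2*M - 12 = 0 := hx
    linarith
  have hbdd : BddAbove R := ⟨b, fun x hx => (hub x hx).le⟩
  have hf2 : (2:ℝ)^3 - 2*2^2 + (3-M)*2 + 2*M - 12 = -6 := by ring
  have hfb : 0 < b^3 - 2*b^2 + (3-M)*b + 2*M - 12 := h_pos M hM b hb2 hb3 b le_rfl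
  have hex : ∃ x ∈ Set.Ioc 2 b, x^3 - 2*x^2 + (3-M)*x + 2*M - 12 = 0 := by
    have h2b : (2:ℝ) ≤ b := by linarith
    have him := intermediate_value_Ioc h2b hcont.continuousOn
    have hmem : (0:ℝ) ∈ Set.Ioc ((2:ℝ)^3 - 2*2^2 + (3-M)*2 + 2*M - 12)
        (b^3 - 2*b^2 + (3-M)*b + 2*M - 12) := by
      rw [hf2]; constructor <;> linarith
    obtain ⟨x, hx1, hx2⟩ := him hmem
    exact ⟨x, hx1, hx2⟩
  obtain ⟨x₀, hx₀mem, hx₀root⟩ := hex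
  have hRne : R.Nonempty := ⟨x₀, hx₀root⟩
  set r := sSup R with hrdef
  have hrR : r ∈ R := hclosed.csSup_mem hRne hbdd
  have hr2 : 2 < r := lt_of_lt_of_le hx₀mem.1 (le_csSup hbdd hx₀root)
  letI instE : DecidableEq (Fin (s+4)) := Classical.decEq _
  letI inst : DecidableRel (coneTriangle s).Adj := Classical.decRel _
  have hpoly : ∀ x : ℝ, x^3 - 2*x^2 + (3-M)*x + 2*M - 12
      = x^3 - 2*x^2 - (3+(s:ℝ))*x + 2*(s:ℝ) := by
    intro x; rw [hs6]; ring
  have hgreat : IsGreatest (spectrum ℝ ((coneTriangle s).adjMatrix ℝ)) r := by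
    constructor
    · apply root_mem_spectrum s (by omega)
      rw [← hpoly]; exact hrR
    · intro μ hμ
      rcases spectrum_cases s μ hμ with h | h | h
      · exact le_csSup hbdd (by rw [hR]; show _ = 0; rw [hpoly]; exact h)
      · rw [h]; linarith
      · rw [h]; linarith
  have hspec : specRad (coneTriangle s) = r := by
    have : specRad (coneTriangle s)
        = sSup (spectrum ℝ ((coneTriangle s).adjMatrix ℝ)) := rfl
    rw [this, hgreat.csSup_eq]
  refine ⟨⟨?_, ?_⟩, ?_⟩
  · rw [hspec]; exact hrR
  · intro x hx
    rw [hspec]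
    exact le_csSup hbdd hx
  · rw [hspec]
    exact hub r hrR
end

section
/- For every odd integer n ≥ 5, λ(K⁺_{(n−1)/2,(n+1)/2}) ≥ √(n² − 1)/2 + 2/(n − 1). -/
open SimpleGraph

open Matrix in
lemma rayleigh_le_sSup_spectrum {m : Type*} [Fintype m] [DecidableEq m] {A : Matrix m m ℝ}
    (hA : A.IsHermitian) (v : m → ℝ) :
    v ⬝ᵥ (A *ᵥ v) ≤ sSup (spectrum ℝ A) * (v ⬝ᵥ v) := by
  set S := sSup (spectrum ℝ A) with hS
  have hbdd : BddAbove (spectrum ℝ A) := (Matrix.finite_spectrum A).bddAbove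
  have hle : ∀ i, hA.eigenvalues i ≤ S :=
    fun i => le_csSup hbdd (hA.eigenvalues_mem_spectrum_real i)
  set U : Matrix m m ℝ := (hA.eigenvectorUnitary : Matrix m m ℝ) with hU
  set w : m → ℝ := Uᵀ *ᵥ v with hw
  have hdot : ∀ x : m → ℝ, v ⬝ᵥ (U *ᵥ x) = w ⬝ᵥ x := by
    intro x
    rw [dotProduct_mulVec, hw, Matrix.mulVec_transpose]
  have hUU : U * Uᵀ = 1 := by
    have h := (Matrix.mem_unitaryGroup_iff).mp hA.eigenvectorUnitary.2
    rwa [Matrix.star_eq_conjTranspose, Matrix.conjTranspose_eq_transpose_of_trivial] at h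
  have key1 : v ⬝ᵥ (A *ᵥ v) = ∑ i, hA.eigenvalues i * (w i)^2 := by
    conv_lhs => rw [hA.spectral_theorem]
    simp only [Unitary.conjStarAlgAut_apply, Unitary.coe_star]
    rw [← Matrix.mulVec_mulVec, ← Matrix.mulVec_mulVec]
    have hstar : (star U : Matrix m m ℝ) = Uᵀ := by
      rw [Matrix.star_eq_conjTranspose, Matrix.conjTranspose_eq_transpose_of_trivial]
    rw [hstar, hdot]
    simp [dotProduct, Matrix.mulVec_diagonal]
    exact Finset.sum_congr rfl fun i _ => by ring
  have key2 : v ⬝ᵥ v = ∑ i, (w i)^2 := by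
    have : v ⬝ᵥ v = v ⬝ᵥ ((U * Uᵀ) *ᵥ v) := by rw [hUU, Matrix.one_mulVec]
    rw [this, ← Matrix.mulVec_mulVec, hdot]
    simp [dotProduct, pow_two]
    rfl
  rw [key1, key2, Finset.mul_sum]
  exact Finset.sum_le_sum fun i _ =>
    mul_le_mul_of_nonneg_right (hle i) (sq_nonneg _)

lemma sum_ite_val {k : ℕ} (m : ℕ) (hm : m < k) :
    (∑ j : Fin k, if (j : ℕ) = m then (1:ℝ) else 0) = 1 := by
  rw [Finset.sum_eq_single (⟨m, hm⟩ : Fin k)]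
  · simp
  · intro j _ hj
    rw [if_neg]
    exact fun h => hj (Fin.ext h)
  · intro h
    exact absurd (Finset.mem_univ _) h

lemma Kplus_aux (k : ℕ) (hk : 2 ≤ k) :
    Real.sqrt ((k : ℝ) * ((k : ℝ) + 1)) + 1 / (k : ℝ) ≤ specRad (KplusAB k (k + 1)) := by
  classical
  set G := KplusAB k (k + 1) with hG
  rw [specRad]
  set A : Matrix (Fin k ⊕ Fin (k+1)) (Fin k ⊕ Fin (k+1)) ℝ := G.adjMatrix ℝ with hA
  have hHerm : A.IsHermitian := by
    rw [Matrix.IsHermitian, Matrix.conjTranspose_eq_transpose_of_trivial]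
    exact SimpleGraph.isSymm_adjMatrix G
  have hα0 : (0:ℝ) < (k:ℝ) := by exact_mod_cast (by omega : 0 < k)
  have hβ0 : (0:ℝ) < (k:ℝ) + 1 := by positivity
  set v : Fin k ⊕ Fin (k+1) → ℝ :=
    Sum.elim (fun _ => Real.sqrt ((k:ℝ) + 1)) (fun _ => Real.sqrt (k:ℝ)) with hv
  have hsβ : Real.sqrt ((k:ℝ)+1) * Real.sqrt ((k:ℝ)+1) = (k:ℝ)+1 :=
    Real.mul_self_sqrt hβ0.le
  have hsα : Real.sqrt (k:ℝ) * Real.sqrt (k:ℝ) = (k:ℝ) := Real.mul_self_sqrt hα0.le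
  -- adjacency entries
  have hAd1 : ∀ (i j : Fin k), A (.inl i) (.inl j) =
      (if ((i:ℕ)=0 ∧ (j:ℕ)=1) ∨ ((i:ℕ)=1 ∧ (j:ℕ)=0) then (1:ℝ) else 0) := by
    intro i j
    rw [hA, SimpleGraph.adjMatrix_apply]
    congr 1
  have hAd2 : ∀ (i : Fin k) (j : Fin (k+1)), A (.inl i) (.inr j) = 1 := by
    intro i j
    rw [hA, SimpleGraph.adjMatrix_apply, if_pos]
    trivial
  have hAd3 : ∀ (i : Fin (k+1)) (j : Fin k), A (.inr i) (.inl j) = 1 := by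
    intro i j
    rw [hA, SimpleGraph.adjMatrix_apply, if_pos]
    trivial
  have hAd4 : ∀ (i j : Fin (k+1)), A (.inr i) (.inr j) = 0 := by
    intro i j
    rw [hA, SimpleGraph.adjMatrix_apply, if_neg]
    exact fun h => h
  -- the double indicator sum
  have hd1 : ∑ i : Fin k, ∑ j : Fin k,
      (if (i:ℕ)=0 ∧ (j:ℕ)=1 then (1:ℝ) else 0) = 1 := by
    have step : ∀ i : Fin k,
        (∑ j : Fin k, if (i:ℕ)=0 ∧ (j:ℕ)=1 then (1:ℝ) else 0)
          = if (i:ℕ)=0 then 1 else 0 := by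
      intro i
      by_cases hi : (i:ℕ) = 0
      · simp [hi, sum_ite_val 1 (by omega : 1 < k)]
      · simp [hi]
    rw [Finset.sum_congr rfl fun i _ => step i, sum_ite_val 0 (by omega : 0 < k)]
  have hd2 : ∑ i : Fin k, ∑ j : Fin k,
      (if (i:ℕ)=1 ∧ (j:ℕ)=0 then (1:ℝ) else 0) = 1 := by
    have step : ∀ i : Fin k,
        (∑ j : Fin k, if (i:ℕ)=1 ∧ (j:ℕ)=0 then (1:ℝ) else 0)
          = if (i:ℕ)=1 then 1 else 0 := by
      intro i
      by_cases hi : (i:ℕ) = 1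
      · simp [hi, sum_ite_val 0 (by omega : 0 < k)]
      · simp [hi]
    rw [Finset.sum_congr rfl fun i _ => step i, sum_ite_val 1 (by omega : 1 < k)]
  have hdouble : ∑ i : Fin k, ∑ j : Fin k,
      (if ((i:ℕ)=0 ∧ (j:ℕ)=1) ∨ ((i:ℕ)=1 ∧ (j:ℕ)=0) then (1:ℝ) else 0) = 2 := by
    have point : ∀ (i j : Fin k),
        (if ((i:ℕ)=0 ∧ (j:ℕ)=1) ∨ ((i:ℕ)=1 ∧ (j:ℕ)=0) then (1:ℝ) else 0)
          = (if (i:ℕ)=0 ∧ (j:ℕ)=1 then (1:ℝ) else 0)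
            + (if (i:ℕ)=1 ∧ (j:ℕ)=0 then (1:ℝ) else 0) := by
      intro i j
      by_cases h1 : (i:ℕ)=0 ∧ (j:ℕ)=1
      · by_cases h2 : (i:ℕ)=1 ∧ (j:ℕ)=0
        · exfalso; omega
        · simp [h1, h2]
      · by_cases h2 : (i:ℕ)=1 ∧ (j:ℕ)=0
        · simp [h1, h2]
        · simp [h1, h2]
    rw [Finset.sum_congr rfl fun i _ => Finset.sum_congr rfl fun j _ => point i j]
    simp only [Finset.sum_add_distrib]
    rw [hd1, hd2]
    norm_num
  -- mulVec values
  have hx1 : ∀ i : Fin k, A.mulVec v (.inl i) =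
      (∑ j : Fin k, (if ((i:ℕ)=0 ∧ (j:ℕ)=1) ∨ ((i:ℕ)=1 ∧ (j:ℕ)=0) then (1:ℝ) else 0))
        * Real.sqrt ((k:ℝ)+1) + ((k:ℝ)+1) * Real.sqrt (k:ℝ) := by
    intro i
    rw [Matrix.mulVec, dotProduct, Fintype.sum_sum_type]
    simp only [hAd1 i, hAd2 i]
    have e : ∀ j : Fin (k+1), (1:ℝ) * v (.inr j) = Real.sqrt (k:ℝ) :=
      fun j => one_mul _
    have e' : ∀ j : Fin k,
        (if ((i:ℕ)=0 ∧ (j:ℕ)=1) ∨ ((i:ℕ)=1 ∧ (j:ℕ)=0) then (1:ℝ) else 0) * v (.inl j)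
          = (if ((i:ℕ)=0 ∧ (j:ℕ)=1) ∨ ((i:ℕ)=1 ∧ (j:ℕ)=0) then (1:ℝ) else 0)
            * Real.sqrt ((k:ℝ)+1) := fun j => rfl
    rw [Finset.sum_congr rfl fun j _ => e' j, Finset.sum_congr rfl fun j _ => e j,
      ← Finset.sum_mul]
    simp only [Finset.sum_const, Finset.card_univ, Fintype.card_fin, nsmul_eq_mul]
    push_cast
    ring
  have hx2 : ∀ i : Fin (k+1), A.mulVec v (.inr i) = (k:ℝ) * Real.sqrt ((k:ℝ)+1) := by
    intro i
    rw [Matrix.mulVec, dotProduct, Fintype.sum_sum_type]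
    simp only [hAd3 i, hAd4 i]
    have h1 : ∀ j : Fin k, (1:ℝ) * v (.inl j) = Real.sqrt ((k:ℝ)+1) :=
      fun j => one_mul _
    have h2 : ∀ j : Fin (k+1), (0:ℝ) * v (.inr j) = 0 := fun j => zero_mul _
    rw [Finset.sum_congr rfl fun j _ => h1 j, Finset.sum_congr rfl fun j _ => h2 j]
    simp only [Finset.sum_const, Finset.card_univ, Fintype.card_fin, nsmul_eq_mul,
      Finset.sum_const_zero, add_zero]
    ring
  have hvAv : dotProduct v (A.mulVec v)
      = 2 * ((k:ℝ)+1) + 2 * ((k:ℝ) * ((k:ℝ)+1))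
          * (Real.sqrt (k:ℝ) * Real.sqrt ((k:ℝ)+1)) := by
    rw [dotProduct, Fintype.sum_sum_type]
    have e1 : ∑ i : Fin k, v (.inl i) * A.mulVec v (.inl i)
        = 2 * ((k:ℝ)+1) + (k:ℝ) * ((k:ℝ)+1)
            * (Real.sqrt (k:ℝ) * Real.sqrt ((k:ℝ)+1)) := by
      have step : ∀ i : Fin k, v (.inl i) * A.mulVec v (.inl i)
          = Real.sqrt ((k:ℝ)+1) * Real.sqrt ((k:ℝ)+1)
              * (∑ j : Fin k, (if ((i:ℕ)=0 ∧ (j:ℕ)=1) ∨ ((i:ℕ)=1 ∧ (j:ℕ)=0)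
                  then (1:ℝ) else 0))
            + Real.sqrt ((k:ℝ)+1) * (((k:ℝ)+1) * Real.sqrt (k:ℝ)) := by
        intro i
        rw [hx1 i]
        show Real.sqrt ((k:ℝ)+1) * _ = _
        ring
      rw [Finset.sum_congr rfl fun i _ => step i]
      rw [Finset.sum_add_distrib, ← Finset.mul_sum, hdouble]
      simp only [Finset.sum_const, Finset.card_univ, Fintype.card_fin, nsmul_eq_mul]
      rw [hsβ]
      ring
    have e2 : ∑ i : Fin (k+1), v (.inr i) * A.mulVec v (.inr i)
        = (k:ℝ) * ((k:ℝ)+1) * (Real.sqrt (k:ℝ) * Real.sqrt ((k:ℝ)+1)) := by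
      have step : ∀ i : Fin (k+1), v (.inr i) * A.mulVec v (.inr i)
          = Real.sqrt (k:ℝ) * ((k:ℝ) * Real.sqrt ((k:ℝ)+1)) := by
        intro i
        rw [hx2 i]
        rfl
      rw [Finset.sum_congr rfl fun i _ => step i]
      simp only [Finset.sum_const, Finset.card_univ, Fintype.card_fin, nsmul_eq_mul]
      push_cast
      ring
    rw [e1, e2]
    ring
  have hvv : dotProduct v v = 2 * ((k:ℝ) * ((k:ℝ)+1)) := by
    rw [dotProduct, Fintype.sum_sum_type]
    have s1 : ∀ i : Fin k, v (.inl i) * v (.inl i) = (k:ℝ)+1 := fun i => hsβ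
    have s2 : ∀ i : Fin (k+1), v (.inr i) * v (.inr i) = (k:ℝ) := fun i => hsα
    rw [Finset.sum_congr rfl fun i _ => s1 i, Finset.sum_congr rfl fun i _ => s2 i]
    simp only [Finset.sum_const, Finset.card_univ, Fintype.card_fin, nsmul_eq_mul]
    push_cast
    ring
  have hineq := @rayleigh_le_sSup_spectrum _ _ (Classical.decEq _) _ hHerm v
  rw [hvv, hvAv] at hineq
  have hc2 : (0:ℝ) < 2 * ((k:ℝ) * ((k:ℝ)+1)) := by positivity
  have hkey : (Real.sqrt ((k:ℝ) * ((k:ℝ)+1)) + 1 / (k:ℝ)) * (2 * ((k:ℝ) * ((k:ℝ)+1)))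
      = 2 * ((k:ℝ)+1) + 2 * ((k:ℝ) * ((k:ℝ)+1))
          * (Real.sqrt (k:ℝ) * Real.sqrt ((k:ℝ)+1)) := by
    rw [Real.sqrt_mul hα0.le]
    field_simp
    ring
  refine (mul_le_mul_iff_of_pos_right hc2).mp ?_
  rw [hkey]
  exact hineq

theorem Kplus_odd_lower_bound (n : ℕ) (hn : 5 ≤ n) (hodd : Odd n) :
    Real.sqrt ((n : ℝ) ^ 2 - 1) / 2 + 2 / ((n : ℝ) - 1) ≤
      specRad (KplusAB ((n - 1) / 2) ((n + 1) / 2)) := by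
  obtain ⟨m, hm⟩ := hodd
  have hm2 : 2 ≤ m := by omega
  have e1 : (n - 1) / 2 = m := by omega
  have e2 : (n + 1) / 2 = m + 1 := by omega
  rw [e1, e2]
  refine le_trans (le_of_eq ?_) (Kplus_aux m hm2)
  have hn' : (n : ℝ) = 2 * (m : ℝ) + 1 := by
    rw [hm]; push_cast; ring
  have hm0 : (m : ℝ) ≠ 0 := by
    exact_mod_cast (by omega : m ≠ 0)
  rw [hn']
  have h4 : (2 * (m:ℝ) + 1) ^ 2 - 1 = 2 ^ 2 * ((m:ℝ) * ((m:ℝ) + 1)) := by ring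
  rw [h4, Real.sqrt_mul (by norm_num : (0:ℝ) ≤ 2 ^ 2), Real.sqrt_sq (by norm_num : (0:ℝ) ≤ 2)]
  field_simp
  ring
end
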